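/- arXiv:2101.11464 — 3 statements merged into one kernel-verified Lean document; each statement's English description precedes it below -/
import Mathlib

section
/- The family {e_α : −S ≤ α ≤ S} is an orthonormal basis of ℂⁿ, and the identity n^{-1/2} Σ_{α=−S}^{S} e_α⊗e_α = n^{-1/2} Σ_{α=−S}^{S} (−1)^{S−α} |α⟩⊗|−α⟩ holds in ℂⁿ⊗ℂⁿ; that is, in the basis {e_α} the vector ψ = n^{-1/2} Σ_α e_α⊗e_α coincides with the SU(2) singlet vector φ = n^{-1/2} Σ_α (−1)^{S−α} |α,−α⟩. -/
open BigOperators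

/-- The index of `-α` when index `i` corresponds to `α = i - S` in `{-S, …, S}`. -/
def revIdx (S : ℕ) (i : Fin (2 * S + 1)) : Fin (2 * S + 1) :=
  ⟨2 * S - (i : ℕ), by omega⟩

/-- The vectors `e_α` of Eq. (takagi_basis): `e_0 = i^S |0⟩`,
`e_α = (i^{S-α}/√2)(|α⟩ + |-α⟩)` and `e_{-α} = (i^{S-α+1}/√2)(|α⟩ - |-α⟩)` for `α > 0`,
where index `i : Fin (2S+1)` corresponds to `α = i - S`. -/
noncomputable def eAlpha (S : ℕ) (i : Fin (2 * S + 1)) : EuclideanSpace ℂ (Fin (2 * S + 1)) :=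
  if (i : ℕ) = S then
    (Complex.I ^ S) • EuclideanSpace.single i 1
  else if S < (i : ℕ) then
    -- α = i - S > 0, exponent S - α = 2S - i
    ((Complex.I ^ (2 * S - (i : ℕ))) / (Real.sqrt 2 : ℂ)) •
      (EuclideanSpace.single i (1 : ℂ) + EuclideanSpace.single (revIdx S i) 1)
  else
    -- α = i - S < 0, i.e. this is e_{-a} with a = S - i > 0; exponent S - a + 1 = i + 1
    ((Complex.I ^ ((i : ℕ) + 1)) / (Real.sqrt 2 : ℂ)) •
      (EuclideanSpace.single (revIdx S i) (1 : ℂ) - EuclideanSpace.single i 1)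

/-- The elementary tensor of two vectors of `ℂⁿ`, as a function on `Fin n × Fin n`. -/
noncomputable def tens {n : ℕ} (v w : EuclideanSpace ℂ (Fin n)) : Fin n × Fin n → ℂ :=
  fun p => v p.1 * w p.2

@[simp] lemma revIdx_coe (S : ℕ) (i : Fin (2*S+1)) :
    ((revIdx S i : Fin (2*S+1)) : ℕ) = 2*S - (i:ℕ) := rfl

lemma revIdx_invol (S : ℕ) : Function.Involutive (revIdx S) := by
  intro i; have := i.2; simp [revIdx, Fin.ext_iff]; omega

lemma inner_single_single (n : ℕ) (i j : Fin n) :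
    (inner ℂ (EuclideanSpace.single i (1:ℂ)) (EuclideanSpace.single j (1:ℂ)) : ℂ)
      = if i = j then 1 else 0 := by
  rw [EuclideanSpace.inner_single_left]
  simp [EuclideanSpace.single_apply, eq_comm]

lemma negI_mul_I (k : ℕ) : (-Complex.I) ^ k * Complex.I ^ k = 1 := by
  rw [← mul_pow]; simp

lemma Ipow_sq (k : ℕ) : Complex.I ^ k * Complex.I ^ k * (-1:ℂ)^k = 1 := by
  rw [← pow_add, ← two_mul, pow_mul, Complex.I_sq, ← mul_pow]; norm_num

lemma sqrt2_sq : ((Real.sqrt 2 : ℝ) : ℂ)^2 = 2 := by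
  rw [← Complex.ofReal_pow, Real.sq_sqrt (by norm_num)]; norm_num

lemma neg_one_pow_sub (m k : ℕ) (h : k ≤ 2*m) : ((-1:ℂ))^(2*m - k) = (-1)^k := by
  have h2 : ((-1:ℂ))^(2*m - k) * (-1)^k = ((-1:ℂ))^(2*m) := by rw [← pow_add]; congr 1; omega
  have h3 : ((-1:ℂ))^(2*m) = 1 := by rw [pow_mul]; norm_num
  have h4 : ((-1:ℂ))^k * (-1)^k = 1 := by rw [← pow_add, ← two_mul, pow_mul]; norm_num
  exact mul_right_cancel₀ (pow_ne_zero k (by norm_num : (-1:ℂ) ≠ 0)) (h2.trans (h3.trans h4.symm))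

set_option maxHeartbeats 1000000 in
lemma inner_eAlpha (S : ℕ) (i j : Fin (2*S+1)) :
    (inner ℂ (eAlpha S i) (eAlpha S j) : ℂ) = if i = j then 1 else 0 := by
  have hs2 : ((Real.sqrt 2 : ℝ) : ℂ) ≠ 0 := by
    simp [Real.sqrt_eq_zero']
  have hi := i.2; have hj := j.2
  unfold eAlpha
  split_ifs with h1 h2 h3 h3 h4 h4 <;>
    simp only [inner_smul_left, inner_smul_right, inner_add_left, inner_add_right,
      inner_sub_left, inner_sub_right, inner_single_single, Fin.ext_iff, revIdx_coe,
      map_div₀, map_pow, Complex.conj_I, Complex.conj_ofReal] <;>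
    split_ifs <;>
    first
      | omega
      | (try field_simp
         try ring_nf
         try simp [negI_mul_I, ← mul_pow]
         try omega
         try simp_all only []
         try rw [Ipow_sq, sqrt2_sq]
         try rw [pow_mul', Complex.I_sq, ← mul_pow]
         try norm_num)

set_option maxHeartbeats 1000000 in
lemma pair_eq (S : ℕ) (i : Fin (2*S+1)) (hSi : S < (i:ℕ)) :
    tens (eAlpha S i) (eAlpha S i) + tens (eAlpha S (revIdx S i)) (eAlpha S (revIdx S i))
      = ((-1 : ℂ) ^ (2 * S - (i : ℕ))) •
          tens (EuclideanSpace.single i 1) (EuclideanSpace.single (revIdx S i) 1)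
        + ((-1 : ℂ) ^ (2 * S - ((revIdx S i : Fin (2*S+1)) : ℕ))) •
          tens (EuclideanSpace.single (revIdx S i) 1)
            (EuclideanSpace.single (revIdx S (revIdx S i)) 1) := by
  have hi := i.2
  have hrr := revIdx_invol S i
  funext p
  obtain ⟨a, b⟩ := p
  have ha := a.2; have hb := b.2
  simp only [Pi.add_apply, tens, eAlpha, hrr, revIdx_coe]
  rw [if_neg (by omega : ¬ ((i:ℕ) = S)), if_pos hSi, if_neg (by omega : ¬ (2*S - (i:ℕ) = S)),
    if_neg (by omega : ¬ (S < 2*S - (i:ℕ)))]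
  simp only [tens, Pi.add_apply, Pi.smul_apply, smul_eq_mul,
    PiLp.smul_apply, PiLp.add_apply, PiLp.sub_apply,
    EuclideanSpace.single_apply, revIdx_coe, Fin.ext_iff]
  have hpar : ((-1:ℂ)) ^ (2*S - (2*S - (i:ℕ))) = (-1) ^ (2*S - (i:ℕ)) := by
    rw [show 2*S - (2*S - (i:ℕ)) = (i:ℕ) from by omega]
    exact (neg_one_pow_sub S (i:ℕ) (by omega)).symm
  rw [hpar]
  split_ifs <;>
    first
      | omega
      | (try field_simp
         try ring_nf
         try simp only [pow_mul', Complex.I_sq, sqrt2_sq]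
         try ring)

lemma pair_S (S : ℕ) (i : Fin (2*S+1)) (h : (i:ℕ) = S) :
    tens (eAlpha S i) (eAlpha S i)
      = ((-1 : ℂ) ^ (2 * S - (i : ℕ))) •
          tens (EuclideanSpace.single i 1) (EuclideanSpace.single (revIdx S i) 1) := by
  have hrev : revIdx S i = i := by simp [revIdx, Fin.ext_iff]; omega
  have hIS : Complex.I ^ S * Complex.I ^ S = (-1:ℂ)^S := by
    rw [← pow_add, ← two_mul, pow_mul, Complex.I_sq]
  funext p
  obtain ⟨a, b⟩ := p
  simp only [tens, eAlpha, if_pos h, hrev, Pi.smul_apply, PiLp.smul_apply, smul_eq_mul,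
    EuclideanSpace.single_apply]
  rw [show 2*S - (i:ℕ) = S from by omega]
  generalize (if a = i then (1:ℂ) else 0) = x
  generalize (if b = i then (1:ℂ) else 0) = y
  linear_combination x * y * hIS

noncomputable def Ffun (S : ℕ) (i : Fin (2*S+1)) : Fin (2*S+1) × Fin (2*S+1) → ℂ :=
  tens (eAlpha S i) (eAlpha S i)

noncomputable def Gfun (S : ℕ) (i : Fin (2*S+1)) : Fin (2*S+1) × Fin (2*S+1) → ℂ :=
  ((-1 : ℂ) ^ (2 * S - (i : ℕ))) •
    tens (EuclideanSpace.single i 1) (EuclideanSpace.single (revIdx S i) 1)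

lemma key_pair (S : ℕ) (i : Fin (2*S+1)) :
    Ffun S i + Ffun S (revIdx S i) = Gfun S i + Gfun S (revIdx S i) := by
  rcases lt_trichotomy (S : ℕ) (i : ℕ) with hlt | heq | hgt
  · exact pair_eq S i hlt
  · have hr : revIdx S i = i := by simp [revIdx, Fin.ext_iff]; omega
    have h1 : Ffun S i = Gfun S i := by
      unfold Ffun Gfun; exact pair_S S i heq.symm
    rw [hr, h1]
  · have hj : S < ((revIdx S i : Fin (2*S+1)) : ℕ) := by
      have := i.2; simp [revIdx]; omega
    have h := pair_eq S (revIdx S i) hj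
    rw [revIdx_invol S i] at h
    unfold Ffun Gfun
    rw [revIdx_invol S i]
    rw [add_comm (tens (eAlpha S i) (eAlpha S i))]
    rw [add_comm (((-1:ℂ) ^ (2 * S - (i:ℕ))) •
      tens (EuclideanSpace.single i 1) (EuclideanSpace.single (revIdx S i) 1))]
    exact h

lemma sum_FG (S : ℕ) : ∑ i : Fin (2*S+1), Ffun S i = ∑ i : Fin (2*S+1), Gfun S i := by
  let e : Equiv.Perm (Fin (2*S+1)) := (revIdx_invol S).toPerm
  have he : ∀ i, e i = revIdx S i := fun _ => rfl
  have hf2 : ∑ i, Ffun S (revIdx S i) = ∑ i, Ffun S i := by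
    rw [← Finset.sum_congr rfl (fun i _ => by rw [← he i])]
    exact Equiv.sum_comp e (Ffun S)
  have hg2 : ∑ i, Gfun S (revIdx S i) = ∑ i, Gfun S i := by
    rw [← Finset.sum_congr rfl (fun i _ => by rw [← he i])]
    exact Equiv.sum_comp e (Gfun S)
  have hsum2 : (2:ℂ) • ∑ i, Ffun S i = (2:ℂ) • ∑ i, Gfun S i := by
    rw [two_smul, two_smul]
    calc (∑ i, Ffun S i) + ∑ i, Ffun S i = ∑ i, (Ffun S i + Ffun S (revIdx S i)) := by
          rw [Finset.sum_add_distrib, hf2]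
      _ = ∑ i, (Gfun S i + Gfun S (revIdx S i)) := Finset.sum_congr rfl (fun i _ => key_pair S i)
      _ = (∑ i, Gfun S i) + ∑ i, Gfun S i := by rw [Finset.sum_add_distrib, hg2]
  exact smul_right_injective _ (two_ne_zero) hsum2

/-- `{e_α}` is an orthonormal basis of `ℂⁿ`, and
`n^{-1/2} Σ_α e_α ⊗ e_α = n^{-1/2} Σ_α (-1)^{S-α} |α⟩ ⊗ |-α⟩`. -/
theorem eAlpha_orthonormal_basis_and_singlet (S : ℕ) (hS : 1 ≤ S) :
    Orthonormal ℂ (eAlpha S) ∧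
    Submodule.span ℂ (Set.range (eAlpha S)) = ⊤ ∧
    ((Real.sqrt (2 * S + 1) : ℂ))⁻¹ •
        ∑ i : Fin (2 * S + 1), tens (eAlpha S i) (eAlpha S i)
      = ((Real.sqrt (2 * S + 1) : ℂ))⁻¹ •
        ∑ i : Fin (2 * S + 1), ((-1 : ℂ) ^ (2 * S - (i : ℕ))) •
          tens (EuclideanSpace.single i 1) (EuclideanSpace.single (revIdx S i) 1) := by
  have hon : Orthonormal ℂ (eAlpha S) := by
    rw [orthonormal_iff_ite]; exact inner_eAlpha S
  refine ⟨hon, ?_, ?_⟩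
  · exact hon.linearIndependent.span_eq_top_of_card_eq_finrank (by simp)
  · congr 1
    simpa [Ffun, Gfun] using sum_FG S
end

section
/- Suppose u ≤ 0 ≤ v and let H = Σ_{x=−ℓ+1}^{ℓ−1} (u T_{x,x+1} + v Q_{x,x+1}) on (ℂⁿ)^{⊗2ℓ}. Then: (i) H ≥ (2ℓ−1)u·I in the sense of quadratic forms; (ii) for every unit vector φ = Σ_α c_α e_α ∈ ℂⁿ with Σ_{α=1}^n c_α² = 0, the product state φ^{⊗2ℓ} satisfies H φ^{⊗2ℓ} = (2ℓ−1)u · φ^{⊗2ℓ} (and such φ exists for every n ≥ 2, e.g. c = (1, i, 0, …, 0)/√2). In particular (2ℓ−1)u is the smallest eigenvalue of H. -/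
open Matrix BigOperators

/-- The transposition operator `T` on `ℂⁿ ⊗ ℂⁿ`, determined by `T (φ ⊗ χ) = χ ⊗ φ`. -/
noncomputable def transOp (n : ℕ) : Matrix (Fin n × Fin n) (Fin n × Fin n) ℂ :=
  fun p q => if p.1 = q.2 ∧ p.2 = q.1 then 1 else 0

/-- The maximally entangled vector `ψ = n^{-1/2} Σ_α e_α ⊗ e_α`. -/
noncomputable def psiVec (n : ℕ) : Fin n × Fin n → ℂ :=
  fun p => if p.1 = p.2 then ((Real.sqrt n : ℂ))⁻¹ else 0

/-- The orthogonal projection `Q = |ψ⟩⟨ψ|` onto the span of `ψ`. -/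
noncomputable def QOp (n : ℕ) : Matrix (Fin n × Fin n) (Fin n × Fin n) ℂ :=
  fun p q => psiVec n p * (starRingEnd ℂ) (psiVec n q)

/-- A two-body operator `A` acting on the tensor factors at positions `p, q` of the chain
`(ℂⁿ)^{⊗ 2ℓ}`, and as the identity on all other factors. Configurations `Fin (2ℓ) → Fin n`
index the product basis of `(ℂⁿ)^{⊗ 2ℓ}`. -/
noncomputable def bondOp (n ℓ : ℕ) (A : Matrix (Fin n × Fin n) (Fin n × Fin n) ℂ)
    (p q : Fin (2 * ℓ)) :
    Matrix ((Fin (2 * ℓ)) → Fin n) ((Fin (2 * ℓ)) → Fin n) ℂ :=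
  fun σ τ => A (σ p, σ q) (τ p, τ q) *
    ∏ y ∈ (Finset.univ.erase p).erase q, (if σ y = τ y then (1 : ℂ) else 0)

/-- The chain Hamiltonian `Σ_{x=-ℓ+1}^{ℓ-1} A_{x,x+1}` on `(ℂⁿ)^{⊗ 2ℓ}`, where sites
`-ℓ+1, …, ℓ` are encoded as positions `0, …, 2ℓ-1`. -/
noncomputable def chainH (n ℓ : ℕ) (A : Matrix (Fin n × Fin n) (Fin n × Fin n) ℂ) :
    Matrix ((Fin (2 * ℓ)) → Fin n) ((Fin (2 * ℓ)) → Fin n) ℂ :=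
  ∑ x ∈ Finset.range (2 * ℓ - 1),
    if h : x + 1 < 2 * ℓ then bondOp n ℓ A ⟨x, by omega⟩ ⟨x + 1, h⟩ else 0

/-- The product state `φ^{⊗ 2ℓ}` with `φ = Σ_α c_α e_α`. -/
noncomputable def prodState (n ℓ : ℕ) (c : Fin n → ℂ) : ((Fin (2 * ℓ)) → Fin n) → ℂ :=
  fun σ => ∏ x : Fin (2 * ℓ), c (σ x)

section Split

variable {n m : ℕ}

/-- Splitting a configuration into its values at `p, q` and the rest. -/

def splitE (n : ℕ) {m : ℕ} (p q : Fin m) (hpq : p ≠ q) :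
    (Fin m → Fin n) ≃ (Fin n × Fin n) × ({y : Fin m // y ≠ p ∧ y ≠ q} → Fin n) where
  toFun σ := ((σ p, σ q), fun y => σ y.1)
  invFun x y := if h1 : y = p then x.1.1 else if h2 : y = q then x.1.2 else x.2 ⟨y, h1, h2⟩
  left_inv σ := by
    funext y
    by_cases h1 : y = p
    · simp [h1]
    · by_cases h2 : y = q <;> simp [h1, h2, Ne.symm hpq]
  right_inv x := by
    obtain ⟨⟨a, b⟩, g⟩ := x
    refine Prod.ext (Prod.ext ?_ ?_) (funext fun y => ?_)
    · simp
    · simp [Ne.symm hpq]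
    · obtain ⟨y, h1, h2⟩ := y; simp [h1, h2]

lemma splitE_symm_p (p q : Fin m) (hpq : p ≠ q) (ab : Fin n × Fin n)
    (g : {y : Fin m // y ≠ p ∧ y ≠ q} → Fin n) :
    (splitE n p q hpq).symm (ab, g) p = ab.1 := by
  simp [splitE]

lemma splitE_symm_q (p q : Fin m) (hpq : p ≠ q) (ab : Fin n × Fin n)
    (g : {y : Fin m // y ≠ p ∧ y ≠ q} → Fin n) :
    (splitE n p q hpq).symm (ab, g) q = ab.2 := by
  simp [splitE, Ne.symm hpq]

lemma splitE_symm_other (p q : Fin m) (hpq : p ≠ q) (ab : Fin n × Fin n)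
    (g : {y : Fin m // y ≠ p ∧ y ≠ q} → Fin n) (y : {y : Fin m // y ≠ p ∧ y ≠ q}) :
    (splitE n p q hpq).symm (ab, g) y.1 = g y := by
  obtain ⟨y, h1, h2⟩ := y
  simp [splitE, h1, h2]

lemma splitE_symm_restr (p q : Fin m) (hpq : p ≠ q) (ab : Fin n × Fin n)
    (g : {y : Fin m // y ≠ p ∧ y ≠ q} → Fin n) :
    (fun y : {y : Fin m // y ≠ p ∧ y ≠ q} => (splitE n p q hpq).symm (ab, g) y.1) = g := by
  funext y; exact splitE_symm_other p q hpq ab g y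

end Split

lemma delta_prod {n m : ℕ} (p q : Fin m) (σ τ : Fin m → Fin n) :
    (∏ y ∈ (Finset.univ.erase p).erase q, (if σ y = τ y then (1 : ℂ) else 0)) =
      if (fun y : {y : Fin m // y ≠ p ∧ y ≠ q} => σ y.1) =
         (fun y : {y : Fin m // y ≠ p ∧ y ≠ q} => τ y.1) then 1 else 0 := by
  rw [Finset.prod_boole]
  congr 1
  simp only [eq_iff_iff, funext_iff, Finset.mem_erase, Finset.mem_univ, and_true]
  constructor
  · rintro h ⟨y, h1, h2⟩; exact h y ⟨h2, h1⟩
  · rintro h y ⟨h2, h1⟩; exact h ⟨y, h1, h2⟩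

lemma bond_mulVec {n ℓ : ℕ} (A : Matrix (Fin n × Fin n) (Fin n × Fin n) ℂ)
    (p q : Fin (2 * ℓ)) (hpq : p ≠ q) (w : ((Fin (2 * ℓ)) → Fin n) → ℂ)
    (σ : (Fin (2 * ℓ)) → Fin n) :
    (bondOp n ℓ A p q *ᵥ w) σ =
      ∑ cd : Fin n × Fin n, A (σ p, σ q) cd *
        w ((splitE n p q hpq).symm (cd, fun y => σ y.1)) := by
  rw [mulVec]
  show (∑ τ, bondOp n ℓ A p q σ τ * w τ) = _
  rw [← Equiv.sum_comp (splitE n p q hpq).symm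
    (fun τ => bondOp n ℓ A p q σ τ * w τ), Fintype.sum_prod_type]
  refine Fintype.sum_congr _ _ fun cd => ?_
  simp only [bondOp, delta_prod p q, splitE_symm_p, splitE_symm_q, splitE_symm_restr]
  rw [Finset.sum_congr rfl (fun g _ => by rw [mul_ite, mul_zero, mul_one, ite_mul, zero_mul]),
    Finset.sum_ite_eq]
  simp

lemma transOp_mulVec {n : ℕ} (x : Fin n × Fin n → ℂ) (ab : Fin n × Fin n) :
    (transOp n *ᵥ x) ab = x (ab.2, ab.1) := by
  rw [mulVec]
  show (∑ cd, transOp n ab cd * x cd) = _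
  have : ∀ cd : Fin n × Fin n, transOp n ab cd * x cd
      = if (ab.2, ab.1) = cd then x cd else 0 := by
    intro cd
    simp only [transOp, Prod.ext_iff]
    by_cases h1 : ab.1 = cd.2 <;> by_cases h2 : ab.2 = cd.1 <;>
      simp [h1, h2, eq_comm]
  rw [Finset.sum_congr rfl fun cd _ => this cd, Finset.sum_ite_eq]
  simp

lemma sum_normSq_swap {n : ℕ} (x : Fin n × Fin n → ℂ) :
    ∑ ab : Fin n × Fin n, Complex.normSq (x (ab.2, ab.1))
      = ∑ ab : Fin n × Fin n, Complex.normSq (x ab) := by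
  exact Equiv.sum_comp (Equiv.prodComm (Fin n) (Fin n)) fun ab => Complex.normSq (x ab)

lemma dot_self_re {ι : Type*} [Fintype ι] (x : ι → ℂ) :
    (star x ⬝ᵥ x).re = ∑ i, Complex.normSq (x i) := by
  rw [dotProduct, Complex.re_sum]
  refine Finset.sum_congr rfl fun i _ => ?_
  simp [Pi.star_apply, ← Complex.normSq_eq_conj_mul_self]

lemma T_quad {n : ℕ} (x : Fin n × Fin n → ℂ) :
    (star x ⬝ᵥ (transOp n *ᵥ x)).re ≤ (star x ⬝ᵥ x).re := by
  rw [dot_self_re, dotProduct, Complex.re_sum]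
  have h1 : ∀ ab : Fin n × Fin n,
      ((star x) ab * (transOp n *ᵥ x) ab).re
        ≤ (Complex.normSq (x ab) + Complex.normSq (x (ab.2, ab.1))) / 2 := by
    intro ab
    rw [transOp_mulVec, Pi.star_apply]
    calc ((starRingEnd ℂ) (x ab) * x (ab.2, ab.1)).re
        ≤ ‖(starRingEnd ℂ) (x ab) * x (ab.2, ab.1)‖ := Complex.re_le_norm _
      _ = ‖x ab‖ * ‖x (ab.2, ab.1)‖ := by simp
      _ ≤ (Complex.normSq (x ab) + Complex.normSq (x (ab.2, ab.1))) / 2 := by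
          rw [← Complex.sq_norm, ← Complex.sq_norm]
          nlinarith [sq_nonneg (‖x ab‖ - ‖x (ab.2, ab.1)‖)]
  calc (∑ ab : Fin n × Fin n, ((star x) ab * (transOp n *ᵥ x) ab).re)
      ≤ ∑ ab : Fin n × Fin n,
          (Complex.normSq (x ab) + Complex.normSq (x (ab.2, ab.1))) / 2 :=
        Finset.sum_le_sum fun ab _ => h1 ab
    _ = ∑ ab : Fin n × Fin n, Complex.normSq (x ab) := by
        rw [← Finset.sum_div, Finset.sum_add_distrib, sum_normSq_swap]; ring

lemma Q_quad {n : ℕ} (x : Fin n × Fin n → ℂ) :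
    0 ≤ (star x ⬝ᵥ (QOp n *ᵥ x)).re := by
  have key : star x ⬝ᵥ (QOp n *ᵥ x) =
      (starRingEnd ℂ) (∑ q, (starRingEnd ℂ) (psiVec n q) * x q) *
        (∑ q, (starRingEnd ℂ) (psiVec n q) * x q) := by
    rw [dotProduct]
    have : ∀ p, (star x) p * (QOp n *ᵥ x) p
        = ((starRingEnd ℂ) (x p) * psiVec n p) *
          (∑ q, (starRingEnd ℂ) (psiVec n q) * x q) := by
      intro p
      rw [mulVec, Pi.star_apply]
      show (starRingEnd ℂ) (x p) * (∑ q, QOp n p q * x q) = _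
      rw [Finset.mul_sum, mul_assoc, Finset.mul_sum, Finset.mul_sum]
      exact Finset.sum_congr rfl fun q _ => by simp only [QOp]; ring
    rw [Finset.sum_congr rfl fun p _ => this p, ← Finset.sum_mul, map_sum]
    congr 1
    refine Finset.sum_congr rfl fun p _ => ?_
    rw [RingHom.map_mul, Complex.conj_conj]; ring
  rw [key, ← Complex.normSq_eq_conj_mul_self]
  simpa using Complex.normSq_nonneg _

lemma bond_quad {n ℓ : ℕ} (A : Matrix (Fin n × Fin n) (Fin n × Fin n) ℂ)
    (p q : Fin (2 * ℓ)) (hpq : p ≠ q) (w : ((Fin (2 * ℓ)) → Fin n) → ℂ) :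
    star w ⬝ᵥ (bondOp n ℓ A p q *ᵥ w) =
      ∑ g : {y : Fin (2 * ℓ) // y ≠ p ∧ y ≠ q} → Fin n,
        star (fun ab => w ((splitE n p q hpq).symm (ab, g))) ⬝ᵥ
          (A *ᵥ fun ab => w ((splitE n p q hpq).symm (ab, g))) := by
  rw [dotProduct]
  rw [Finset.sum_congr rfl fun σ _ => by
    rw [bond_mulVec A p q hpq w σ]]
  rw [← Equiv.sum_comp (splitE n p q hpq).symm
    (fun σ => (star w) σ * ∑ cd : Fin n × Fin n, A (σ p, σ q) cd *
      w ((splitE n p q hpq).symm (cd, fun y => σ y.1))), Fintype.sum_prod_type,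
    Finset.sum_comm]
  refine Fintype.sum_congr _ _ fun g => ?_
  rw [dotProduct]
  refine Fintype.sum_congr _ _ fun ab => ?_
  simp only [splitE_symm_p, splitE_symm_q, splitE_symm_restr, Pi.star_apply, mulVec,
    dotProduct]

lemma split_norm {n ℓ : ℕ} (p q : Fin (2 * ℓ)) (hpq : p ≠ q)
    (w : ((Fin (2 * ℓ)) → Fin n) → ℂ) :
    star w ⬝ᵥ w =
      ∑ g : {y : Fin (2 * ℓ) // y ≠ p ∧ y ≠ q} → Fin n,
        star (fun ab => w ((splitE n p q hpq).symm (ab, g))) ⬝ᵥ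
          (fun ab => w ((splitE n p q hpq).symm (ab, g))) := by
  rw [dotProduct,
    ← Equiv.sum_comp (splitE n p q hpq).symm (fun σ => (star w) σ * w σ),
    Fintype.sum_prod_type, Finset.sum_comm]
  refine Fintype.sum_congr _ _ fun g => ?_
  rw [dotProduct]
  simp [Pi.star_apply]

lemma bond_lower {n ℓ : ℕ} (u v : ℝ) (hu : u ≤ 0) (hv : 0 ≤ v)
    (p q : Fin (2 * ℓ)) (hpq : p ≠ q) (w : ((Fin (2 * ℓ)) → Fin n) → ℂ) :
    u * (star w ⬝ᵥ w).re ≤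
      (star w ⬝ᵥ (bondOp n ℓ ((u : ℂ) • transOp n + (v : ℂ) • QOp n) p q *ᵥ w)).re := by
  rw [bond_quad _ p q hpq w, split_norm p q hpq w]
  rw [Complex.re_sum, Complex.re_sum, Finset.mul_sum]
  refine Finset.sum_le_sum fun g _ => ?_
  set x : Fin n × Fin n → ℂ := fun ab => w ((splitE n p q hpq).symm (ab, g)) with hx
  have expand : star x ⬝ᵥ (((u : ℂ) • transOp n + (v : ℂ) • QOp n) *ᵥ x)
      = (u : ℂ) * (star x ⬝ᵥ (transOp n *ᵥ x)) + (v : ℂ) * (star x ⬝ᵥ (QOp n *ᵥ x)) := by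
    rw [add_mulVec, smul_mulVec, smul_mulVec, dotProduct_add,
      dotProduct_smul, dotProduct_smul, smul_eq_mul, smul_eq_mul]
  rw [expand]
  have hre : ((u : ℂ) * (star x ⬝ᵥ (transOp n *ᵥ x)) + (v : ℂ) * (star x ⬝ᵥ (QOp n *ᵥ x))).re
      = u * (star x ⬝ᵥ (transOp n *ᵥ x)).re + v * (star x ⬝ᵥ (QOp n *ᵥ x)).re := by
    simp [Complex.add_re, Complex.mul_re]
  rw [hre]
  have h1 : u * (star x ⬝ᵥ x).re ≤ u * (star x ⬝ᵥ (transOp n *ᵥ x)).re :=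
    mul_le_mul_of_nonpos_left (T_quad x) hu
  have h2 : 0 ≤ v * (star x ⬝ᵥ (QOp n *ᵥ x)).re := mul_nonneg hv (Q_quad x)
  linarith

lemma sumM_mulVec {ι κ : Type*} [Fintype κ] [DecidableEq κ] (s : Finset ι)
    (M : ι → Matrix κ κ ℂ) (w : κ → ℂ) :
    (∑ i ∈ s, M i) *ᵥ w = ∑ i ∈ s, (M i *ᵥ w) := by
  classical
  induction s using Finset.induction_on with
  | empty => simp [Matrix.zero_mulVec]
  | insert _ _ h ih => rw [Finset.sum_insert h, Finset.sum_insert h, add_mulVec, ih]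

lemma dot_sum {ι κ : Type*} [Fintype κ] (s : Finset ι) (v : κ → ℂ) (f : ι → κ → ℂ) :
    v ⬝ᵥ (∑ i ∈ s, f i) = ∑ i ∈ s, v ⬝ᵥ f i := by
  classical
  induction s using Finset.induction_on with
  | empty => simp
  | insert _ _ h ih => rw [Finset.sum_insert h, Finset.sum_insert h, dotProduct_add, ih]

lemma chain_lower {n ℓ : ℕ} (u v : ℝ) (hu : u ≤ 0) (hv : 0 ≤ v)
    (w : ((Fin (2 * ℓ)) → Fin n) → ℂ) :
    ((2 * ℓ - 1 : ℕ) : ℝ) * u * (star w ⬝ᵥ w).re ≤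
      (star w ⬝ᵥ (chainH n ℓ ((u : ℂ) • transOp n + (v : ℂ) • QOp n) *ᵥ w)).re := by
  rw [chainH, sumM_mulVec, dot_sum, Complex.re_sum]
  have key : ∀ x ∈ Finset.range (2 * ℓ - 1),
      u * (star w ⬝ᵥ w).re ≤
        (star w ⬝ᵥ ((if h : x + 1 < 2 * ℓ then
          bondOp n ℓ ((u : ℂ) • transOp n + (v : ℂ) • QOp n) ⟨x, by omega⟩ ⟨x + 1, h⟩
          else 0) *ᵥ w)).re := by
    intro x hx
    rw [Finset.mem_range] at hx
    have h : x + 1 < 2 * ℓ := by omega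
    rw [dif_pos h]
    exact bond_lower u v hu hv ⟨x, by omega⟩ ⟨x + 1, h⟩
      (by simp [Fin.ext_iff]) w
  calc ((2 * ℓ - 1 : ℕ) : ℝ) * u * (star w ⬝ᵥ w).re
      = ∑ _x ∈ Finset.range (2 * ℓ - 1), u * (star w ⬝ᵥ w).re := by
        rw [Finset.sum_const, Finset.card_range, nsmul_eq_mul]; ring
    _ ≤ _ := Finset.sum_le_sum key

lemma prod_split {n ℓ : ℕ} (c : Fin n → ℂ) (p q : Fin (2 * ℓ)) (hpq : p ≠ q)
    (σ : (Fin (2 * ℓ)) → Fin n) :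
    prodState n ℓ c σ =
      c (σ p) * c (σ q) * ∏ y ∈ (Finset.univ.erase p).erase q, c (σ y) := by
  rw [prodState, ← Finset.mul_prod_erase Finset.univ (fun x => c (σ x)) (Finset.mem_univ p),
    ← Finset.mul_prod_erase (Finset.univ.erase p) (fun x => c (σ x))
      (Finset.mem_erase.mpr ⟨Ne.symm hpq, Finset.mem_univ q⟩), mul_assoc]

lemma Q_sum_zero {n : ℕ} (c : Fin n → ℂ) (hc2 : ∑ α, c α ^ 2 = 0) (s : Fin n × Fin n) :
    ∑ cd : Fin n × Fin n, QOp n s cd * (c cd.1 * c cd.2) = 0 := by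
  have : ∀ cd : Fin n × Fin n, QOp n s cd * (c cd.1 * c cd.2)
      = psiVec n s * ((starRingEnd ℂ) (psiVec n cd) * (c cd.1 * c cd.2)) := by
    intro cd; rw [QOp]; ring
  rw [Finset.sum_congr rfl fun cd _ => this cd, ← Finset.mul_sum]
  have inner : ∑ cd : Fin n × Fin n, (starRingEnd ℂ) (psiVec n cd) * (c cd.1 * c cd.2)
      = (starRingEnd ℂ) ((Real.sqrt n : ℂ))⁻¹ * ∑ α, c α ^ 2 := by
    rw [Fintype.sum_prod_type, Finset.mul_sum]
    refine Fintype.sum_congr _ _ fun a => ?_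
    have : ∀ b : Fin n, (starRingEnd ℂ) (psiVec n (a, b)) * (c a * c b)
        = if a = b then (starRingEnd ℂ) ((Real.sqrt n : ℂ))⁻¹ * (c a * c b) else 0 := by
      intro b
      by_cases h : a = b <;> simp [psiVec, h]
    rw [Finset.sum_congr rfl fun b _ => this b, Finset.sum_ite_eq]
    simp [sq]
  rw [inner, hc2, mul_zero, mul_zero]

lemma bond_prod {n ℓ : ℕ} (u v : ℝ) (c : Fin n → ℂ) (hc2 : ∑ α, c α ^ 2 = 0)
    (p q : Fin (2 * ℓ)) (hpq : p ≠ q) :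
    bondOp n ℓ ((u : ℂ) • transOp n + (v : ℂ) • QOp n) p q *ᵥ prodState n ℓ c
      = (u : ℂ) • prodState n ℓ c := by
  funext σ
  rw [bond_mulVec _ p q hpq]
  set R : ℂ := ∏ y ∈ (Finset.univ.erase p).erase q, c (σ y) with hR
  have hw : ∀ cd : Fin n × Fin n,
      prodState n ℓ c ((splitE n p q hpq).symm (cd, fun y => σ y.1))
        = c cd.1 * c cd.2 * R := by
    intro cd
    rw [prod_split c p q hpq, splitE_symm_p, splitE_symm_q]
    congr 1
    refine Finset.prod_congr rfl fun y hy => ?_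
    rw [Finset.mem_erase, Finset.mem_erase] at hy
    have := splitE_symm_other p q hpq cd (fun y => σ y.1) ⟨y, hy.2.1, hy.1⟩
    rw [this]
  rw [Finset.sum_congr rfl fun cd _ => by rw [hw cd]]
  have expand : ∀ cd : Fin n × Fin n,
      ((u : ℂ) • transOp n + (v : ℂ) • QOp n) (σ p, σ q) cd * (c cd.1 * c cd.2 * R)
        = (u : ℂ) * (transOp n (σ p, σ q) cd * (c cd.1 * c cd.2 * R)) +
          (v : ℂ) * (QOp n (σ p, σ q) cd * (c cd.1 * c cd.2)) * R := by
    intro cd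
    simp only [Matrix.add_apply, Matrix.smul_apply, smul_eq_mul]
    ring
  rw [Finset.sum_congr rfl fun cd _ => expand cd, Finset.sum_add_distrib,
    ← Finset.mul_sum]
  have hT : ∑ cd : Fin n × Fin n, transOp n (σ p, σ q) cd * (c cd.1 * c cd.2 * R)
      = c (σ q) * c (σ p) * R := by
    have := transOp_mulVec (fun cd : Fin n × Fin n => c cd.1 * c cd.2 * R) (σ p, σ q)
    rw [mulVec] at this
    exact this
  have hQ : ∑ cd : Fin n × Fin n,
      (v : ℂ) * (QOp n (σ p, σ q) cd * (c cd.1 * c cd.2)) * R = 0 := by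
    have : ∑ cd : Fin n × Fin n,
        (v : ℂ) * (QOp n (σ p, σ q) cd * (c cd.1 * c cd.2)) * R
        = (v : ℂ) * (∑ cd : Fin n × Fin n, QOp n (σ p, σ q) cd * (c cd.1 * c cd.2)) * R := by
      rw [Finset.mul_sum, Finset.sum_mul]
    rw [this, Q_sum_zero c hc2, mul_zero, zero_mul]
  rw [hT, hQ, add_zero, Pi.smul_apply, smul_eq_mul, prod_split c p q hpq σ]
  ring

lemma chain_prod {n ℓ : ℕ} (u v : ℝ) (c : Fin n → ℂ) (hc2 : ∑ α, c α ^ 2 = 0) :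
    chainH n ℓ ((u : ℂ) • transOp n + (v : ℂ) • QOp n) *ᵥ prodState n ℓ c
      = ((((2 * ℓ - 1 : ℕ) : ℝ) * u : ℝ) : ℂ) • prodState n ℓ c := by
  rw [chainH, sumM_mulVec]
  have key : ∀ x ∈ Finset.range (2 * ℓ - 1),
      ((if h : x + 1 < 2 * ℓ then
        bondOp n ℓ ((u : ℂ) • transOp n + (v : ℂ) • QOp n) ⟨x, by omega⟩ ⟨x + 1, h⟩
        else 0) *ᵥ prodState n ℓ c) = (u : ℂ) • prodState n ℓ c := by
    intro x hx
    rw [Finset.mem_range] at hx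
    have h : x + 1 < 2 * ℓ := by omega
    rw [dif_pos h]
    exact bond_prod u v c hc2 ⟨x, by omega⟩ ⟨x + 1, h⟩ (by simp [Fin.ext_iff])
  rw [Finset.sum_congr rfl key, Finset.sum_const, Finset.card_range,
    ← Nat.cast_smul_eq_nsmul ℂ, smul_smul]
  congr 1
  push_cast
  ring

noncomputable def cex (n : ℕ) : Fin n → ℂ := fun α =>
  if (α : ℕ) = 0 then ((Real.sqrt 2 : ℝ) : ℂ)⁻¹
  else if (α : ℕ) = 1 then ((Real.sqrt 2 : ℝ) : ℂ)⁻¹ * Complex.I else 0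

lemma sqrt2_ne : ((Real.sqrt 2 : ℝ) : ℂ) ≠ 0 := by
  exact Complex.ofReal_ne_zero.mpr (by positivity)

lemma cex_abs {n : ℕ} (hn : 2 ≤ n) : ∑ α, ‖cex n α‖ ^ 2 = 1 := by
  have h0 : (0 : ℕ) < n := by omega
  have h1 : (1 : ℕ) < n := by omega
  set a0 : Fin n := ⟨0, h0⟩
  set a1 : Fin n := ⟨1, h1⟩
  have hne : a0 ≠ a1 := by simp [a0, a1, Fin.ext_iff]
  have hsub : ({a0, a1} : Finset (Fin n)) ⊆ Finset.univ := Finset.subset_univ _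
  rw [← Finset.sum_subset hsub (fun α _ hα => ?_), Finset.sum_pair hne]
  · have v0 : cex n a0 = ((Real.sqrt 2 : ℝ) : ℂ)⁻¹ := by simp [cex, a0]
    have v1 : cex n a1 = ((Real.sqrt 2 : ℝ) : ℂ)⁻¹ * Complex.I := by simp [cex, a1]
    rw [v0, v1]
    have habs : ‖((Real.sqrt 2 : ℝ) : ℂ)⁻¹‖ = (Real.sqrt 2)⁻¹ := by
      rw [norm_inv, Complex.norm_real, Real.norm_of_nonneg (Real.sqrt_nonneg 2)]
    rw [norm_mul, Complex.norm_I, mul_one, habs, inv_pow,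
      Real.sq_sqrt (by norm_num : (0:ℝ) ≤ 2)]
    norm_num
  · simp only [Finset.mem_insert, Finset.mem_singleton, not_or] at hα
    simp only [a0, a1, Fin.ext_iff] at hα
    have : cex n α = 0 := by simp [cex, hα.1, hα.2]
    rw [this]
    simp

lemma cex_sq {n : ℕ} (hn : 2 ≤ n) : ∑ α, cex n α ^ 2 = 0 := by
  have h0 : (0 : ℕ) < n := by omega
  have h1 : (1 : ℕ) < n := by omega
  set a0 : Fin n := ⟨0, h0⟩
  set a1 : Fin n := ⟨1, h1⟩
  have hne : a0 ≠ a1 := by simp [a0, a1, Fin.ext_iff]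
  have hsub : ({a0, a1} : Finset (Fin n)) ⊆ Finset.univ := Finset.subset_univ _
  rw [← Finset.sum_subset hsub (fun α _ hα => ?_), Finset.sum_pair hne]
  · have v0 : cex n a0 = ((Real.sqrt 2 : ℝ) : ℂ)⁻¹ := by simp [cex, a0]
    have v1 : cex n a1 = ((Real.sqrt 2 : ℝ) : ℂ)⁻¹ * Complex.I := by simp [cex, a1]
    rw [v0, v1, mul_pow, Complex.I_sq]
    ring
  · simp only [Finset.mem_insert, Finset.mem_singleton, not_or] at hα
    simp only [a0, a1, Fin.ext_iff] at hα
    have : cex n α = 0 := by simp [cex, hα.1, hα.2]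
    rw [this]
    simp

lemma prodState_ne_zero {n ℓ : ℕ} (hn : 2 ≤ n) : prodState n ℓ (cex n) ≠ 0 := by
  intro h
  have h0 : (0 : ℕ) < n := by omega
  have := congrFun h (fun _ => ⟨0, h0⟩)
  rw [prodState] at this
  simp only [Pi.zero_apply] at this
  have hval : ∀ x : Fin (2 * ℓ), cex n ((fun _ => (⟨0, h0⟩ : Fin n)) x)
      = ((Real.sqrt 2 : ℝ) : ℂ)⁻¹ := by intro x; simp [cex]
  rw [Finset.prod_congr rfl fun x _ => hval x, Finset.prod_const] at this
  exact pow_ne_zero _ (inv_ne_zero sqrt2_ne) this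

lemma dot_self_eq_ofReal {ι : Type*} [Fintype ι] (w : ι → ℂ) :
    star w ⬝ᵥ w = ((∑ i, Complex.normSq (w i) : ℝ) : ℂ) := by
  rw [dotProduct, Complex.ofReal_sum]
  refine Finset.sum_congr rfl fun i _ => ?_
  simp [Pi.star_apply, ← Complex.normSq_eq_conj_mul_self]

/-- For `u ≤ 0 ≤ v`: the chain Hamiltonian `H = Σ (uT + vQ)_{x,x+1}` satisfies
`H ≥ (2ℓ-1)u` as quadratic forms; product states built from `c` with `Σ c_α² = 0` are
eigenstates with eigenvalue `(2ℓ-1)u` (and such `c` exist); hence `(2ℓ-1)u` is the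
smallest eigenvalue of `H`. -/
theorem ferromagnetic_ground_states (n ℓ : ℕ) (hn : 2 ≤ n) (hℓ : 1 ≤ ℓ)
    (u v : ℝ) (hu : u ≤ 0) (hv : 0 ≤ v) :
    (∀ w : ((Fin (2 * ℓ)) → Fin n) → ℂ,
      ((2 * ℓ - 1 : ℕ) : ℝ) * u * (star w ⬝ᵥ w).re ≤
        (star w ⬝ᵥ (chainH n ℓ ((u : ℂ) • transOp n + (v : ℂ) • QOp n) *ᵥ w)).re) ∧
    (∀ c : Fin n → ℂ, ∑ α, ‖c α‖ ^ 2 = 1 → ∑ α, c α ^ 2 = 0 →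
      chainH n ℓ ((u : ℂ) • transOp n + (v : ℂ) • QOp n) *ᵥ prodState n ℓ c
        = ((((2 * ℓ - 1 : ℕ) : ℝ) * u : ℝ) : ℂ) • prodState n ℓ c) ∧
    (∃ c : Fin n → ℂ, ∑ α, ‖c α‖ ^ 2 = 1 ∧ ∑ α, c α ^ 2 = 0) ∧
    (∃ w : ((Fin (2 * ℓ)) → Fin n) → ℂ, w ≠ 0 ∧
      chainH n ℓ ((u : ℂ) • transOp n + (v : ℂ) • QOp n) *ᵥ w
        = ((((2 * ℓ - 1 : ℕ) : ℝ) * u : ℝ) : ℂ) • w) ∧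
    (∀ μ : ℂ, (∃ w : ((Fin (2 * ℓ)) → Fin n) → ℂ, w ≠ 0 ∧
        chainH n ℓ ((u : ℂ) • transOp n + (v : ℂ) • QOp n) *ᵥ w = μ • w) →
      ((2 * ℓ - 1 : ℕ) : ℝ) * u ≤ μ.re) := by
  refine ⟨fun w => chain_lower u v hu hv w,
    fun c _ hc2 => chain_prod u v c hc2,
    ⟨cex n, cex_abs hn, cex_sq hn⟩,
    ⟨prodState n ℓ (cex n), prodState_ne_zero hn, chain_prod u v (cex n) (cex_sq hn)⟩,
    ?_⟩
  rintro μ ⟨w, hw0, hw⟩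
  have h1 := chain_lower (n := n) (ℓ := ℓ) u v hu hv w
  rw [hw] at h1
  set S : ℝ := ∑ i, Complex.normSq (w i) with hSdef
  have hS : star w ⬝ᵥ w = (S : ℂ) := dot_self_eq_ofReal w
  have hdot : (star w ⬝ᵥ μ • w) = μ * (S : ℂ) := by
    rw [dotProduct_smul, smul_eq_mul, hS]
  rw [hdot] at h1
  have hre : (μ * (S : ℂ)).re = μ.re * S := by
    simp [Complex.mul_re]
  have hN : (star w ⬝ᵥ w).re = S := by rw [hS]; simp
  rw [hre, hN] at h1
  have hSpos : 0 < S := by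
    obtain ⟨i, hi⟩ := Function.ne_iff.mp hw0
    exact Finset.sum_pos' (fun j _ => Complex.normSq_nonneg _)
      ⟨i, Finset.mem_univ i, by simpa [Complex.normSq_pos] using hi⟩
  exact le_of_mul_le_mul_right h1 hSpos
end

section
/- Let u ∈ ℝ, v < 0, ℓ ≥ 1, and H = Σ_{x=−ℓ+1}^{ℓ−1} (u T_{x,x+1} + v Q_{x,x+1}) on (ℂⁿ)^{⊗2ℓ}. For ε ∈ [0,1] define φ_ε = √(1−ε²) e_n⊗e_n + (ε/√(n−1)) Σ_{α=1}^{n−1} e_α⊗e_α ∈ ℂⁿ⊗ℂⁿ, and let Φ_ε ∈ (ℂⁿ)^{⊗2ℓ} be the fully dimerized product state obtained by placing a copy of φ_ε on each of the ℓ disjoint pairs of sites (−ℓ+1,−ℓ+2), (−ℓ+3,−ℓ+4), …, (ℓ−1,ℓ). Then there exists ε ∈ (0,1) such that ⟨Φ_ε, H Φ_ε⟩ < (2ℓ−1)(u + v/n). -/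
open Matrix BigOperators

/-- The partially dimerized pair state
`φ_ε = √(1-ε²) e_n ⊗ e_n + (ε/√(n-1)) Σ_{α=1}^{n-1} e_α ⊗ e_α` (the last basis index
plays the role of `α = n`). -/
noncomputable def pairState (n : ℕ) (hn : 2 ≤ n) (ε : ℝ) : Fin n × Fin n → ℂ :=
  fun p =>
    if p.1 = (⟨n - 1, by omega⟩ : Fin n) ∧ p.2 = (⟨n - 1, by omega⟩ : Fin n) then
      ((Real.sqrt (1 - ε ^ 2) : ℝ) : ℂ)
    else if p.1 = p.2 then ((ε : ℂ) / (Real.sqrt (n - 1) : ℂ))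
    else 0

/-- The fully dimerized product state: a copy of `φ_ε` on each pair of positions
`(2k, 2k+1)`, `k = 0, …, ℓ-1`. -/
noncomputable def dimerState (n ℓ : ℕ) (hn : 2 ≤ n) (ε : ℝ) :
    ((Fin (2 * ℓ)) → Fin n) → ℂ :=
  fun σ => ∏ k ∈ Finset.range ℓ,
    if h : 2 * k + 1 < 2 * ℓ then
      pairState n hn ε (σ ⟨2 * k, by omega⟩, σ ⟨2 * k + 1, h⟩)
    else 1

noncomputable def wfun (n : ℕ) (hn : 2 ≤ n) (ε : ℝ) : Fin n → ℝ :=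
  fun a => if a = (⟨n - 1, by omega⟩ : Fin n) then Real.sqrt (1 - ε ^ 2)
           else ε / Real.sqrt ((n : ℝ) - 1)

lemma pairState_eq (n : ℕ) (hn : 2 ≤ n) (ε : ℝ) (p : Fin n × Fin n) :
    pairState n hn ε p = if p.1 = p.2 then ((wfun n hn ε p.1 : ℝ) : ℂ) else 0 := by
  obtain ⟨a, b⟩ := p
  simp only [pairState, wfun]
  by_cases h : a = b
  · subst h
    by_cases hL : a = (⟨n - 1, by omega⟩ : Fin n)
    · simp [hL]
    · simp only [hL, and_self, if_false, if_true, if_pos rfl]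
      push_cast
      ring
  · have hc : ¬(a = (⟨n - 1, by omega⟩ : Fin n) ∧ b = (⟨n - 1, by omega⟩ : Fin n)) :=
      fun hc => h (hc.1.trans hc.2.symm)
    simp [h, hc]

lemma sum_ite_L {M : Type*} [NonAssocSemiring M] (n : ℕ) (hn : 2 ≤ n) (X Y : M) :
    ∑ a : Fin n, (if a = (⟨n - 1, by omega⟩ : Fin n) then X else Y)
      = X + ((n : ℕ) - 1 : ℕ) * Y := by
  rw [← Finset.add_sum_erase _ _ (Finset.mem_univ (⟨n - 1, by omega⟩ : Fin n)), if_pos rfl]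
  congr 1
  rw [Finset.sum_congr rfl (fun a ha => if_neg (Finset.mem_erase.mp ha).1),
    Finset.sum_const, Finset.card_erase_of_mem (Finset.mem_univ _), Finset.card_univ,
    Fintype.card_fin, nsmul_eq_mul]

section scalars

variable (n : ℕ) (ε : ℝ)

lemma nR_pos (hn : 2 ≤ n) : (0:ℝ) < (n:ℝ) - 1 := by
  have : (2:ℝ) ≤ (n:ℝ) := by exact_mod_cast hn
  linarith

lemma sum_w_sq (hn : 2 ≤ n) (hε2 : ε ^ 2 ≤ 1) : ∑ a : Fin n, (wfun n hn ε a) ^ 2 = 1 := by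
  have h1 := nR_pos n hn
  unfold wfun
  simp only [apply_ite (fun x : ℝ => x ^ 2)]
  rw [sum_ite_L n hn, Real.sq_sqrt (by linarith), div_pow,
    Real.sq_sqrt (by linarith), Nat.cast_sub (by omega : 1 ≤ n), Nat.cast_one]
  field_simp
  ring

lemma sum_w (hn : 2 ≤ n) : ∑ a : Fin n, wfun n hn ε a
    = Real.sqrt (1 - ε ^ 2) + Real.sqrt ((n:ℝ) - 1) * ε := by
  have h1 := nR_pos n hn
  have hs : Real.sqrt ((n:ℝ) - 1) > 0 := Real.sqrt_pos.mpr h1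
  have hsq : Real.sqrt ((n:ℝ) - 1) ^ 2 = (n:ℝ) - 1 := Real.sq_sqrt (by linarith)
  unfold wfun
  rw [sum_ite_L n hn, Nat.cast_sub (by omega : 1 ≤ n), Nat.cast_one]
  field_simp
  linear_combination (-ε) * hsq

lemma sum_w_4 (hn : 2 ≤ n) (hε2 : ε ^ 2 ≤ 1) : ∑ a : Fin n, (wfun n hn ε a) ^ 4
    = (1 - ε ^ 2) ^ 2 + ε ^ 4 / ((n:ℝ) - 1) := by
  have h1 := nR_pos n hn
  have hsq : Real.sqrt ((n:ℝ) - 1) ^ 2 = (n:ℝ) - 1 := Real.sq_sqrt (by linarith)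
  unfold wfun
  simp only [apply_ite (fun x : ℝ => x ^ 4)]
  rw [sum_ite_L n hn, Nat.cast_sub (by omega : 1 ≤ n), Nat.cast_one]
  have e1 : Real.sqrt (1 - ε ^ 2) ^ 4 = (1 - ε ^ 2) ^ 2 := by
    rw [show (4:ℕ) = 2*2 from rfl, pow_mul, Real.sq_sqrt (by linarith)]
  have e2 : (ε / Real.sqrt ((n:ℝ) - 1)) ^ 4 = ε ^ 4 / ((n:ℝ)-1)^2 := by
    rw [div_pow]
    congr 1
    rw [show (4:ℕ) = 2*2 from rfl, pow_mul, hsq]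
  rw [e1, e2]
  field_simp

end scalars


def iotaMap (n ℓ : ℕ) : (Fin ℓ → Fin n) → (Fin (2*ℓ) → Fin n) :=
  fun α i => α ⟨i.val / 2, by have := i.isLt; omega⟩

lemma iota_val (n ℓ : ℕ) (α : Fin ℓ → Fin n) (m : ℕ) (h : m < 2*ℓ) (j : Fin ℓ)
    (hj : m / 2 = j.val) : iotaMap n ℓ α ⟨m, h⟩ = α j := by
  unfold iotaMap
  congr 1
  exact Fin.ext hj

lemma dimerState_eq (n ℓ : ℕ) (hn : 2 ≤ n) (ε : ℝ) (σ : Fin (2*ℓ) → Fin n) :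
    dimerState n ℓ hn ε σ = ∏ k : Fin ℓ, pairState n hn ε
      (σ ⟨2*k.val, by have := k.isLt; omega⟩, σ ⟨2*k.val+1, by have := k.isLt; omega⟩) := by
  unfold dimerState
  rw [← Fin.prod_univ_eq_prod_range (fun k => if h : 2*k+1 < 2*ℓ then
      pairState n hn ε (σ ⟨2*k, by omega⟩, σ ⟨2*k+1, h⟩) else 1) ℓ]
  apply Finset.prod_congr rfl
  intro k _
  rw [dif_pos (by have := k.isLt; omega : 2*(k:ℕ)+1 < 2*ℓ)]

lemma dimerState_iota (n ℓ : ℕ) (hn : 2 ≤ n) (ε : ℝ) (α : Fin ℓ → Fin n) :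
    dimerState n ℓ hn ε (iotaMap n ℓ α) = ∏ j : Fin ℓ, ((wfun n hn ε (α j) : ℝ) : ℂ) := by
  rw [dimerState_eq]
  apply Finset.prod_congr rfl
  intro k _
  rw [iota_val n ℓ α _ _ k (by omega), iota_val n ℓ α _ _ k (by omega),
    pairState_eq, if_pos rfl]

lemma dimerState_support (n ℓ : ℕ) (hn : 2 ≤ n) (ε : ℝ) (σ : Fin (2*ℓ) → Fin n)
    (h : dimerState n ℓ hn ε σ ≠ 0) :
    σ ∈ Finset.image (iotaMap n ℓ) Finset.univ := by
  have hσ : ∀ m : ℕ, ∀ h1 : 2*m+1 < 2*ℓ, σ ⟨2*m, by omega⟩ = σ ⟨2*m+1, h1⟩ := by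
    intro m h1
    by_contra hne
    apply h
    rw [dimerState_eq]
    apply Finset.prod_eq_zero (Finset.mem_univ (⟨m, by omega⟩ : Fin ℓ))
    rw [pairState_eq, if_neg]
    exact hne
  have hσ2 : ∀ a b : Fin (2*ℓ), a.val / 2 = b.val / 2 → σ a = σ b := by
    intro a b hab
    have ha := a.isLt
    have hb := b.isLt
    have h1 : a.val = b.val ∨ (a.val = 2*(a.val/2) ∧ b.val = 2*(a.val/2)+1)
        ∨ (b.val = 2*(a.val/2) ∧ a.val = 2*(a.val/2)+1) := by omega
    rcases h1 with h1 | ⟨h2, h3⟩ | ⟨h2, h3⟩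
    · exact congrArg σ (Fin.ext h1)
    · have e := hσ (a.val/2) (by omega)
      calc σ a = σ ⟨2*(a.val/2), by omega⟩ := congrArg σ (Fin.ext h2)
        _ = σ ⟨2*(a.val/2)+1, by omega⟩ := e
        _ = σ b := congrArg σ (Fin.ext h3.symm)
    · have e := hσ (a.val/2) (by omega)
      calc σ a = σ ⟨2*(a.val/2)+1, by omega⟩ := congrArg σ (Fin.ext h3)
        _ = σ ⟨2*(a.val/2), by omega⟩ := e.symm
        _ = σ b := congrArg σ (Fin.ext h2.symm)
  refine Finset.mem_image.mpr ⟨fun k => σ ⟨2*k.val, by have := k.isLt; omega⟩,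
    Finset.mem_univ _, ?_⟩
  funext i
  exact hσ2 ⟨2*((i.val)/2), by have := i.isLt; omega⟩ i
    (by show (2*((i.val)/2))/2 = i.val/2; omega)

lemma sum_dimer (n ℓ : ℕ) (hn : 2 ≤ n) (ε : ℝ) (F : (Fin (2*ℓ) → Fin n) → ℂ) :
    ∑ σ : Fin (2*ℓ) → Fin n, dimerState n ℓ hn ε σ * F σ
      = ∑ α : Fin ℓ → Fin n, (∏ j : Fin ℓ, ((wfun n hn ε (α j) : ℝ) : ℂ)) * F (iotaMap n ℓ α) := by
  have hinj : ∀ x ∈ (Finset.univ : Finset (Fin ℓ → Fin n)), ∀ y ∈ Finset.univ,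
      iotaMap n ℓ x = iotaMap n ℓ y → x = y := by
    intro x _ y _ hxy
    funext j
    calc x j = iotaMap n ℓ x ⟨2*j.val, by have := j.isLt; omega⟩ :=
          (iota_val n ℓ x _ _ j (by omega)).symm
      _ = iotaMap n ℓ y ⟨2*j.val, by have := j.isLt; omega⟩ := congrFun hxy _
      _ = y j := iota_val n ℓ y _ _ j (by omega)
  rw [← Finset.sum_subset (Finset.subset_univ (Finset.image (iotaMap n ℓ) Finset.univ))
      (fun σ _ hσ => ?_), Finset.sum_image hinj]
  · exact Finset.sum_congr rfl (fun α _ => by rw [dimerState_iota])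
  · rcases eq_or_ne (dimerState n ℓ hn ε σ) 0 with h | h
    · rw [h, zero_mul]
    · exact absurd (dimerState_support n ℓ hn ε σ h) hσ

lemma sum_dimer_conj (n ℓ : ℕ) (hn : 2 ≤ n) (ε : ℝ) (F : (Fin (2*ℓ) → Fin n) → ℂ) :
    ∑ σ : Fin (2*ℓ) → Fin n, (starRingEnd ℂ) (dimerState n ℓ hn ε σ) * F σ
      = ∑ α : Fin ℓ → Fin n, (∏ j : Fin ℓ, ((wfun n hn ε (α j) : ℝ) : ℂ)) * F (iotaMap n ℓ α) := by
  have hinj : ∀ x ∈ (Finset.univ : Finset (Fin ℓ → Fin n)), ∀ y ∈ Finset.univ,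
      iotaMap n ℓ x = iotaMap n ℓ y → x = y := by
    intro x _ y _ hxy
    funext j
    calc x j = iotaMap n ℓ x ⟨2*j.val, by have := j.isLt; omega⟩ :=
          (iota_val n ℓ x _ _ j (by omega)).symm
      _ = iotaMap n ℓ y ⟨2*j.val, by have := j.isLt; omega⟩ := congrFun hxy _
      _ = y j := iota_val n ℓ y _ _ j (by omega)
  rw [← Finset.sum_subset (Finset.subset_univ (Finset.image (iotaMap n ℓ) Finset.univ))
      (fun σ _ hσ => ?_), Finset.sum_image hinj]
  · refine Finset.sum_congr rfl (fun α _ => ?_)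
    rw [dimerState_iota, map_prod]
    congr 1
    exact Finset.prod_congr rfl (fun j _ => Complex.conj_ofReal _)
  · rcases eq_or_ne (dimerState n ℓ hn ε σ) 0 with h | h
    · rw [h, map_zero, zero_mul]
    · exact absurd (dimerState_support n ℓ hn ε σ h) hσ

lemma sum_fn_prod {ι X : Type*} [Fintype ι] [DecidableEq ι] [Fintype X] [DecidableEq X]
    (G : ι → X → ℂ) : ∑ f : ι → X, ∏ j, G j (f j) = ∏ j, ∑ x, G j x := by
  rw [Finset.prod_univ_sum, Fintype.piFinset_univ]

lemma sum_sum_prod {ι X : Type*} [Fintype ι] [DecidableEq ι] [Fintype X] [DecidableEq X]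
    (G : ι → X → X → ℂ) :
    ∑ f : ι → X, ∑ g : ι → X, ∏ j, G j (f j) (g j) = ∏ j, ∑ x : X, ∑ y : X, G j x y := by
  calc ∑ f : ι → X, ∑ g : ι → X, ∏ j, G j (f j) (g j)
      = ∑ p : (ι → X) × (ι → X), ∏ j, G j (p.1 j) (p.2 j) := by
        rw [← Finset.univ_product_univ, Finset.sum_product]
    _ = ∑ h : ι → X × X, ∏ j, G j (h j).1 (h j).2 :=
        (Fintype.sum_equiv (Equiv.arrowProdEquivProdArrow ι (fun _ => X) (fun _ => X)) _ _ (fun h => rfl)).symm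
    _ = ∏ j, ∑ p : X × X, G j p.1 p.2 := sum_fn_prod (fun j (p : X × X) => G j p.1 p.2)
    _ = ∏ j, ∑ x : X, ∑ y : X, G j x y := Finset.prod_congr rfl (fun j _ => by
        rw [← Finset.univ_product_univ, Finset.sum_product])


noncomputable def Aop (n : ℕ) (u v : ℝ) : Matrix (Fin n × Fin n) (Fin n × Fin n) ℂ :=
  (u : ℂ) • transOp n + (v : ℂ) • QOp n

lemma QOp_entry (n : ℕ) (a b c d : Fin n) :
    QOp n ((a,b)) ((c,d)) = (if a = b then (1:ℂ) else 0) * (if c = d then (1:ℂ) else 0)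
      * ((n:ℂ))⁻¹ := by
  unfold QOp psiVec
  by_cases h1 : a = b <;> by_cases h2 : c = d <;> simp [h1, h2]
  rw [← mul_inv, ← Complex.ofReal_mul, Real.mul_self_sqrt (Nat.cast_nonneg n),
    Complex.ofReal_natCast]

lemma Aop_dd (n : ℕ) (u v : ℝ) (a b : Fin n) :
    Aop n u v ((a,a)) ((b,b)) = (if a = b then (u:ℂ) else 0) + (v:ℂ) * ((n:ℂ))⁻¹ := by
  unfold Aop
  rw [Matrix.add_apply, Matrix.smul_apply, Matrix.smul_apply, QOp_entry]
  by_cases h : a = b <;> simp [h, eq_comm, transOp]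

lemma Aop_pp (n : ℕ) (u v : ℝ) (a b : Fin n) :
    Aop n u v ((a,b)) ((a,b)) = if a = b then ((u:ℂ) + (v:ℂ) * ((n:ℂ))⁻¹) else 0 := by
  unfold Aop
  rw [Matrix.add_apply, Matrix.smul_apply, Matrix.smul_apply, QOp_entry]
  by_cases h : a = b <;> simp [h, eq_comm, transOp]

lemma delta_prod_even (n ℓ : ℕ) (x : ℕ) (hx1 : x + 1 < 2*ℓ) (hx : x % 2 = 0)
    (α β : Fin ℓ → Fin n) :
    ∏ y ∈ (Finset.univ.erase (⟨x, by omega⟩ : Fin (2*ℓ))).erase ⟨x+1, hx1⟩,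
      (if iotaMap n ℓ α y = iotaMap n ℓ β y then (1:ℂ) else 0)
    = ∏ j ∈ Finset.univ.erase (⟨x/2, by omega⟩ : Fin ℓ), (if α j = β j then (1:ℂ) else 0) := by
  rw [Finset.prod_boole, Finset.prod_boole]
  congr 1
  apply propext
  constructor
  · intro H j hj
    have hjk : j.val ≠ x/2 := fun hc => (Finset.mem_erase.mp hj).1 (Fin.ext hc)
    have hjl := j.isLt
    have hmem : (⟨2*j.val, by omega⟩ : Fin (2*ℓ)) ∈
        (Finset.univ.erase (⟨x, by omega⟩ : Fin (2*ℓ))).erase ⟨x+1, hx1⟩ := by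
      refine Finset.mem_erase.mpr ⟨fun hc => ?_, Finset.mem_erase.mpr ⟨fun hc => ?_,
        Finset.mem_univ _⟩⟩
      · have := congrArg Fin.val hc; simp only [] at this; omega
      · have := congrArg Fin.val hc; simp only [] at this; omega
    have h2 := H _ hmem
    rwa [iota_val n ℓ α _ _ j (by omega), iota_val n ℓ β _ _ j (by omega)] at h2
  · intro H y hy
    rw [Finset.mem_erase, Finset.mem_erase] at hy
    have hy1 : y.val ≠ x + 1 := fun hc => hy.1 (Fin.ext hc)
    have hy2 : y.val ≠ x := fun hc => hy.2.1 (Fin.ext hc)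
    have hyl := y.isLt
    have e1 : iotaMap n ℓ α y = α ⟨y.val/2, by omega⟩ := rfl
    have e2 : iotaMap n ℓ β y = β ⟨y.val/2, by omega⟩ := rfl
    rw [e1, e2]
    apply H
    refine Finset.mem_erase.mpr ⟨fun hc => ?_, Finset.mem_univ _⟩
    have := congrArg Fin.val hc
    simp only [] at this
    omega

lemma delta_prod_odd (n ℓ : ℕ) (x : ℕ) (hx1 : x + 1 < 2*ℓ) (hx : x % 2 = 1)
    (α β : Fin ℓ → Fin n) :
    ∏ y ∈ (Finset.univ.erase (⟨x, by omega⟩ : Fin (2*ℓ))).erase ⟨x+1, hx1⟩,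
      (if iotaMap n ℓ α y = iotaMap n ℓ β y then (1:ℂ) else 0)
    = if α = β then (1:ℂ) else 0 := by
  rw [Finset.prod_boole]
  congr 1
  apply propext
  constructor
  · intro H
    funext j
    have hjl := j.isLt
    by_cases hj : 2*j.val = x + 1
    · have hmem : (⟨2*j.val+1, by omega⟩ : Fin (2*ℓ)) ∈
          (Finset.univ.erase (⟨x, by omega⟩ : Fin (2*ℓ))).erase ⟨x+1, hx1⟩ := by
        refine Finset.mem_erase.mpr ⟨fun hc => ?_, Finset.mem_erase.mpr ⟨fun hc => ?_,
          Finset.mem_univ _⟩⟩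
        · have := congrArg Fin.val hc; simp only [] at this; omega
        · have := congrArg Fin.val hc; simp only [] at this; omega
      have h2 := H _ hmem
      rwa [iota_val n ℓ α _ _ j (by omega), iota_val n ℓ β _ _ j (by omega)] at h2
    · have hmem : (⟨2*j.val, by omega⟩ : Fin (2*ℓ)) ∈
          (Finset.univ.erase (⟨x, by omega⟩ : Fin (2*ℓ))).erase ⟨x+1, hx1⟩ := by
        refine Finset.mem_erase.mpr ⟨fun hc => ?_, Finset.mem_erase.mpr ⟨fun hc => ?_,
          Finset.mem_univ _⟩⟩
        · have := congrArg Fin.val hc; simp only [] at this; omega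
        · have := congrArg Fin.val hc; simp only [] at this; omega
      have h2 := H _ hmem
      rwa [iota_val n ℓ α _ _ j (by omega), iota_val n ℓ β _ _ j (by omega)] at h2
  · rintro rfl y hy
    rfl

noncomputable def Ebond (n ℓ : ℕ) (hn : 2 ≤ n) (ε u v : ℝ) (p q : Fin (2*ℓ)) : ℂ :=
  ∑ σ : Fin (2*ℓ) → Fin n, (starRingEnd ℂ) (dimerState n ℓ hn ε σ)
    * ∑ τ : Fin (2*ℓ) → Fin n, bondOp n ℓ (Aop n u v) p q σ τ * dimerState n ℓ hn ε τ

lemma Ebond_eq (n ℓ : ℕ) (hn : 2 ≤ n) (ε u v : ℝ) (p q : Fin (2*ℓ)) :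
    Ebond n ℓ hn ε u v p q
      = ∑ α : Fin ℓ → Fin n, (∏ j : Fin ℓ, ((wfun n hn ε (α j) : ℝ) : ℂ))
          * ∑ β : Fin ℓ → Fin n, (∏ j : Fin ℓ, ((wfun n hn ε (β j) : ℝ) : ℂ))
            * bondOp n ℓ (Aop n u v) p q (iotaMap n ℓ α) (iotaMap n ℓ β) := by
  unfold Ebond
  rw [sum_dimer_conj n ℓ hn ε (fun σ => ∑ τ : Fin (2*ℓ) → Fin n,
    bondOp n ℓ (Aop n u v) p q σ τ * dimerState n ℓ hn ε τ)]
  refine Finset.sum_congr rfl (fun α _ => ?_)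
  congr 1
  rw [show (∑ τ : Fin (2*ℓ) → Fin n, bondOp n ℓ (Aop n u v) p q (iotaMap n ℓ α) τ
        * dimerState n ℓ hn ε τ)
      = ∑ τ : Fin (2*ℓ) → Fin n, dimerState n ℓ hn ε τ
        * bondOp n ℓ (Aop n u v) p q (iotaMap n ℓ α) τ from
    Finset.sum_congr rfl (fun τ _ => mul_comm _ _),
    sum_dimer n ℓ hn ε (fun τ => bondOp n ℓ (Aop n u v) p q (iotaMap n ℓ α) τ)]

lemma prod_single_ite {ι : Type*} [Fintype ι] [DecidableEq ι] (k : ι) (A : ℂ) :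
    ∏ j : ι, (if j = k then A else 1) = A := by
  rw [← Finset.mul_prod_erase Finset.univ _ (Finset.mem_univ k), if_pos rfl,
    Finset.prod_eq_one (fun j hj => if_neg (Finset.mem_erase.mp hj).1), mul_one]

lemma prod_two_ite {ι : Type*} [Fintype ι] [DecidableEq ι] (k₁ k₂ : ι) (hne : k₁ ≠ k₂)
    (f g : ι → ℂ) :
    ∏ j : ι, (if j = k₁ then f j else if j = k₂ then g j else 1) = f k₁ * g k₂ := by
  rw [← Finset.mul_prod_erase Finset.univ _ (Finset.mem_univ k₁), if_pos rfl,
    ← Finset.mul_prod_erase _ _ (Finset.mem_erase.mpr ⟨Ne.symm hne, Finset.mem_univ k₂⟩),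
    if_neg (Ne.symm hne), if_pos rfl]
  have h1 : ∀ j ∈ (Finset.univ.erase k₁).erase k₂,
      (if j = k₁ then f j else if j = k₂ then g j else 1) = 1 := fun j hj => by
    rw [if_neg (Finset.mem_erase.mp (Finset.mem_erase.mp hj).2).1,
      if_neg (Finset.mem_erase.mp hj).1]
  rw [Finset.prod_eq_one h1, mul_one]

lemma ite_eq_expand (n : ℕ) (a b : Fin n) :
    (if a = b then (1:ℂ) else 0)
      = ∑ c : Fin n, (if a = c then (1:ℂ) else 0) * (if b = c then (1:ℂ) else 0) := by
  simp only [ite_mul, one_mul, zero_mul, Finset.sum_ite_eq, Finset.mem_univ, if_true]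
  by_cases h : a = b
  · rw [if_pos h, if_pos h.symm]
  · rw [if_neg h, if_neg (Ne.symm h)]

lemma cast_sum_sq (n : ℕ) (hn : 2 ≤ n) (ε : ℝ) (hε2 : ε ^ 2 ≤ 1) :
    ∑ a : Fin n, ((wfun n hn ε a : ℝ) : ℂ) * ((wfun n hn ε a : ℝ) : ℂ) = 1 := by
  have h := sum_w_sq n ε hn hε2
  calc ∑ a : Fin n, ((wfun n hn ε a : ℝ) : ℂ) * ((wfun n hn ε a : ℝ) : ℂ)
      = ((∑ a : Fin n, (wfun n hn ε a) ^ 2 : ℝ) : ℂ) := by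
        push_cast
        exact Finset.sum_congr rfl (fun a _ => by ring)
    _ = 1 := by rw [h]; norm_num

lemma cast_sum_w (n : ℕ) (hn : 2 ≤ n) (ε : ℝ) :
    ∑ a : Fin n, ((wfun n hn ε a : ℝ) : ℂ)
      = ((Real.sqrt (1 - ε ^ 2) + Real.sqrt ((n:ℝ) - 1) * ε : ℝ) : ℂ) := by
  rw [← Complex.ofReal_sum, sum_w n ε hn]

lemma cast_sum_w4 (n : ℕ) (hn : 2 ≤ n) (ε : ℝ) (hε2 : ε ^ 2 ≤ 1) :
    ∑ c : Fin n, ((wfun n hn ε c : ℝ) : ℂ) * ((wfun n hn ε c : ℝ) : ℂ)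
        * (((wfun n hn ε c : ℝ) : ℂ) * ((wfun n hn ε c : ℝ) : ℂ))
      = (((1 - ε ^ 2) ^ 2 + ε ^ 4 / ((n:ℝ) - 1) : ℝ) : ℂ) := by
  have h := sum_w_4 n ε hn hε2
  calc ∑ c : Fin n, ((wfun n hn ε c : ℝ) : ℂ) * ((wfun n hn ε c : ℝ) : ℂ)
        * (((wfun n hn ε c : ℝ) : ℂ) * ((wfun n hn ε c : ℝ) : ℂ))
      = ((∑ c : Fin n, (wfun n hn ε c) ^ 4 : ℝ) : ℂ) := by
        push_cast
        exact Finset.sum_congr rfl (fun c _ => by ring)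
    _ = _ := by rw [h]

lemma double_sum_entry (n : ℕ) (W : Fin n → ℂ) (u' c : ℂ) :
    ∑ a : Fin n, ∑ b : Fin n, W a * W b * ((if a = b then u' else 0) + c)
      = (∑ a : Fin n, W a * W a) * u' + (∑ a : Fin n, W a) * (∑ a : Fin n, W a) * c := by
  have h1 : ∀ a : Fin n, (∑ b : Fin n, W a * W b * ((if a = b then u' else 0) + c))
      = W a * W a * u' + W a * (∑ b : Fin n, W b) * c := by
    intro a
    have h2 : ∀ b : Fin n, W a * W b * ((if a = b then u' else 0) + c)
        = (if a = b then W a * W b * u' else 0) + W a * W b * c := by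
      intro b
      by_cases h : a = b
      · rw [if_pos h, if_pos h]; ring
      · rw [if_neg h, if_neg h]; ring
    rw [Finset.sum_congr rfl (fun b _ => h2 b), Finset.sum_add_distrib,
      Finset.sum_ite_eq]
    simp only [Finset.mem_univ, if_true]
    congr 1
    calc ∑ b : Fin n, W a * W b * c = ∑ b : Fin n, W a * (W b * c) :=
          Finset.sum_congr rfl (fun b _ => by ring)
      _ = W a * ∑ b : Fin n, W b * c := (Finset.mul_sum _ _ _).symm
      _ = W a * ((∑ b : Fin n, W b) * c) := by rw [← Finset.sum_mul]
      _ = W a * (∑ b : Fin n, W b) * c := by ring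
  rw [Finset.sum_congr rfl (fun a _ => h1 a), Finset.sum_add_distrib]
  congr 1
  · rw [← Finset.sum_mul]
  · calc ∑ a : Fin n, W a * (∑ b : Fin n, W b) * c
        = (∑ a : Fin n, W a * (∑ b : Fin n, W b)) * c := by rw [← Finset.sum_mul]
      _ = (∑ a : Fin n, W a) * (∑ a : Fin n, W a) * c := by rw [← Finset.sum_mul]

lemma Ebond_even_val (n ℓ : ℕ) (hn : 2 ≤ n) (ε u v : ℝ) (hε2 : ε ^ 2 ≤ 1)
    (x : ℕ) (hx1 : x + 1 < 2 * ℓ) (hx : x % 2 = 0) :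
    Ebond n ℓ hn ε u v ⟨x, by omega⟩ ⟨x + 1, hx1⟩
      = ((u + (v / n) * (Real.sqrt (1 - ε ^ 2) + Real.sqrt ((n:ℝ) - 1) * ε) ^ 2 : ℝ) : ℂ) := by
  have hk : x / 2 < ℓ := by omega
  rw [Ebond_eq]
  simp only [Finset.mul_sum]
  have key : ∀ α β : Fin ℓ → Fin n,
      (∏ j : Fin ℓ, ((wfun n hn ε (α j) : ℝ) : ℂ)) * ((∏ j : Fin ℓ, ((wfun n hn ε (β j) : ℝ) : ℂ))
        * bondOp n ℓ (Aop n u v) ⟨x, by omega⟩ ⟨x + 1, hx1⟩ (iotaMap n ℓ α) (iotaMap n ℓ β))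
      = ∏ j : Fin ℓ, (fun (j : Fin ℓ) (a b : Fin n) =>
          ((wfun n hn ε a : ℝ) : ℂ) * ((wfun n hn ε b : ℝ) : ℂ)
            * (if j = (⟨x / 2, hk⟩ : Fin ℓ) then Aop n u v ((a, a)) ((b, b))
               else if a = b then 1 else 0)) j (α j) (β j) := by
    intro α β
    simp only [bondOp]
    rw [iota_val n ℓ α x (by omega) ⟨x/2, hk⟩ rfl,
        iota_val n ℓ α (x+1) hx1 ⟨x/2, hk⟩ (by show (x+1)/2 = x/2; omega),
        iota_val n ℓ β x (by omega) ⟨x/2, hk⟩ rfl,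
        iota_val n ℓ β (x+1) hx1 ⟨x/2, hk⟩ (by show (x+1)/2 = x/2; omega),
        delta_prod_even n ℓ x hx1 hx α β]
    have h3 : ∏ j : Fin ℓ, (((wfun n hn ε (α j) : ℝ) : ℂ) * ((wfun n hn ε (β j) : ℝ) : ℂ)
          * (if j = (⟨x / 2, hk⟩ : Fin ℓ) then Aop n u v ((α j, α j)) ((β j, β j))
             else if α j = β j then 1 else 0))
        = ((∏ j : Fin ℓ, ((wfun n hn ε (α j) : ℝ) : ℂ))
            * (∏ j : Fin ℓ, ((wfun n hn ε (β j) : ℝ) : ℂ)))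
          * (Aop n u v ((α ⟨x/2,hk⟩, α ⟨x/2,hk⟩)) ((β ⟨x/2,hk⟩, β ⟨x/2,hk⟩))
            * ∏ j ∈ Finset.univ.erase (⟨x/2, hk⟩ : Fin ℓ),
                (if α j = β j then (1:ℂ) else 0)) := by
      rw [Finset.prod_mul_distrib, Finset.prod_mul_distrib]
      congr 1
      rw [← Finset.mul_prod_erase Finset.univ _ (Finset.mem_univ (⟨x/2,hk⟩ : Fin ℓ)),
        if_pos rfl]
      exact congrArg _ (Finset.prod_congr rfl (fun j hj => if_neg (Finset.mem_erase.mp hj).1))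
    rw [h3]
    ring
  rw [Finset.sum_congr rfl (fun α _ => Finset.sum_congr rfl (fun β _ => key α β)),
    sum_sum_prod (fun (j : Fin ℓ) (a b : Fin n) =>
      ((wfun n hn ε a : ℝ) : ℂ) * ((wfun n hn ε b : ℝ) : ℂ)
        * (if j = (⟨x / 2, hk⟩ : Fin ℓ) then Aop n u v ((a, a)) ((b, b))
           else if a = b then 1 else 0))]
  have hfac : ∀ j : Fin ℓ,
      (∑ a : Fin n, ∑ b : Fin n, ((wfun n hn ε a : ℝ) : ℂ) * ((wfun n hn ε b : ℝ) : ℂ)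
        * (if j = (⟨x / 2, hk⟩ : Fin ℓ) then Aop n u v ((a, a)) ((b, b))
           else if a = b then 1 else 0))
      = if j = (⟨x / 2, hk⟩ : Fin ℓ) then
          ((u + (v / n) * (Real.sqrt (1 - ε ^ 2) + Real.sqrt ((n:ℝ) - 1) * ε) ^ 2 : ℝ) : ℂ)
        else 1 := by
    intro j
    by_cases hj : j = (⟨x / 2, hk⟩ : Fin ℓ)
    · simp only [hj, eq_self_iff_true, if_true]
      simp only [Aop_dd]
      rw [double_sum_entry n (fun a => ((wfun n hn ε a : ℝ) : ℂ)) (u:ℂ) ((v:ℂ) * ((n:ℂ))⁻¹),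
        cast_sum_sq n hn ε hε2, cast_sum_w n hn ε]
      push_cast
      ring
    · simp only [if_neg hj, mul_ite, mul_one, mul_zero, Finset.sum_ite_eq, Finset.mem_univ,
        if_true]
      exact cast_sum_sq n hn ε hε2
  calc ∏ j : Fin ℓ, ∑ a : Fin n, ∑ b : Fin n,
        ((wfun n hn ε a : ℝ) : ℂ) * ((wfun n hn ε b : ℝ) : ℂ)
          * (if j = (⟨x / 2, hk⟩ : Fin ℓ) then Aop n u v ((a, a)) ((b, b))
             else if a = b then 1 else 0)
      = ∏ j : Fin ℓ, (if j = (⟨x / 2, hk⟩ : Fin ℓ) then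
          ((u + (v / n) * (Real.sqrt (1 - ε ^ 2) + Real.sqrt ((n:ℝ) - 1) * ε) ^ 2 : ℝ) : ℂ)
        else 1) := Finset.prod_congr rfl (fun j _ => hfac j)
    _ = _ := prod_single_ite _ _

lemma Ebond_odd_val (n ℓ : ℕ) (hn : 2 ≤ n) (ε u v : ℝ) (hε2 : ε ^ 2 ≤ 1)
    (x : ℕ) (hx1 : x + 1 < 2 * ℓ) (hx : x % 2 = 1) :
    Ebond n ℓ hn ε u v ⟨x, by omega⟩ ⟨x + 1, hx1⟩
      = (((u + v / n) * ((1 - ε ^ 2) ^ 2 + ε ^ 4 / ((n:ℝ) - 1)) : ℝ) : ℂ) := by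
  have hk2 : x / 2 + 1 < ℓ := by omega
  have hk1 : x / 2 < ℓ := by omega
  have hne : (⟨x/2, hk1⟩ : Fin ℓ) ≠ ⟨x/2+1, hk2⟩ := by
    intro hc
    have := congrArg Fin.val hc
    simp only [] at this
    omega
  rw [Ebond_eq]
  simp only [Finset.mul_sum]
  have key : ∀ α β : Fin ℓ → Fin n,
      (∏ j : Fin ℓ, ((wfun n hn ε (α j) : ℝ) : ℂ)) * ((∏ j : Fin ℓ, ((wfun n hn ε (β j) : ℝ) : ℂ))
        * bondOp n ℓ (Aop n u v) ⟨x, by omega⟩ ⟨x + 1, hx1⟩ (iotaMap n ℓ α) (iotaMap n ℓ β))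
      = (if α = β then (∏ j : Fin ℓ, ((wfun n hn ε (α j) : ℝ) : ℂ))
            * (∏ j : Fin ℓ, ((wfun n hn ε (β j) : ℝ) : ℂ))
            * Aop n u v ((α ⟨x/2, hk1⟩, α ⟨x/2+1, hk2⟩)) ((β ⟨x/2, hk1⟩, β ⟨x/2+1, hk2⟩))
         else 0) := by
    intro α β
    simp only [bondOp]
    rw [iota_val n ℓ α x (by omega) ⟨x/2, hk1⟩ rfl,
        iota_val n ℓ α (x+1) hx1 ⟨x/2+1, hk2⟩ (by show (x+1)/2 = x/2+1; omega),
        iota_val n ℓ β x (by omega) ⟨x/2, hk1⟩ rfl,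
        iota_val n ℓ β (x+1) hx1 ⟨x/2+1, hk2⟩ (by show (x+1)/2 = x/2+1; omega),
        delta_prod_odd n ℓ x hx1 hx α β]
    by_cases h : α = β
    · rw [if_pos h, if_pos h]; ring
    · rw [if_neg h, if_neg h]; ring
  rw [Finset.sum_congr rfl (fun α _ => Finset.sum_congr rfl (fun β _ => key α β)),
    Finset.sum_congr rfl (fun α (_ : α ∈ Finset.univ) => Finset.sum_ite_eq Finset.univ α _)]
  simp only [Finset.mem_univ, if_true]
  simp only [Aop_pp]
  have key2 : ∀ α : Fin ℓ → Fin n,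
      (∏ j : Fin ℓ, ((wfun n hn ε (α j) : ℝ) : ℂ)) * (∏ j : Fin ℓ, ((wfun n hn ε (α j) : ℝ) : ℂ))
        * (if α ⟨x/2, hk1⟩ = α ⟨x/2+1, hk2⟩ then ((u:ℂ) + (v:ℂ) * ((n:ℂ))⁻¹) else 0)
      = ((u:ℂ) + (v:ℂ) * ((n:ℂ))⁻¹) * ∑ c : Fin n, ∏ j : Fin ℓ,
          (fun (j : Fin ℓ) (a : Fin n) =>
            ((wfun n hn ε a : ℝ) : ℂ) * ((wfun n hn ε a : ℝ) : ℂ)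
              * (if j = (⟨x/2, hk1⟩ : Fin ℓ) then (if a = c then 1 else 0)
                 else if j = (⟨x/2+1, hk2⟩ : Fin ℓ) then (if a = c then 1 else 0)
                 else 1)) j (α j) := by
    intro α
    have hG : ∀ c : Fin n,
        (∏ j : Fin ℓ, (fun (j : Fin ℓ) (a : Fin n) =>
            ((wfun n hn ε a : ℝ) : ℂ) * ((wfun n hn ε a : ℝ) : ℂ)
              * (if j = (⟨x/2, hk1⟩ : Fin ℓ) then (if a = c then 1 else 0)
                 else if j = (⟨x/2+1, hk2⟩ : Fin ℓ) then (if a = c then 1 else 0)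
                 else 1)) j (α j))
        = (∏ j : Fin ℓ, (((wfun n hn ε (α j) : ℝ) : ℂ) * ((wfun n hn ε (α j) : ℝ) : ℂ)))
          * ((if α ⟨x/2, hk1⟩ = c then (1:ℂ) else 0)
              * (if α ⟨x/2+1, hk2⟩ = c then (1:ℂ) else 0)) := by
      intro c
      rw [Finset.prod_mul_distrib]
      congr 1
      exact prod_two_ite (⟨x/2, hk1⟩ : Fin ℓ) ⟨x/2+1, hk2⟩ hne
        (fun j => if α j = c then (1:ℂ) else 0) (fun j => if α j = c then (1:ℂ) else 0)
    rw [Finset.sum_congr rfl (fun c _ => hG c), ← Finset.mul_sum,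
      ← ite_eq_expand n (α ⟨x/2, hk1⟩) (α ⟨x/2+1, hk2⟩), ← Finset.prod_mul_distrib]
    by_cases hc : α ⟨x/2, hk1⟩ = α ⟨x/2+1, hk2⟩
    · rw [if_pos hc, if_pos hc]; ring
    · rw [if_neg hc, if_neg hc]; ring
  rw [Finset.sum_congr rfl (fun α _ => key2 α), ← Finset.mul_sum, Finset.sum_comm,
    Finset.sum_congr rfl (fun c _ => sum_fn_prod (fun (j : Fin ℓ) (a : Fin n) =>
      ((wfun n hn ε a : ℝ) : ℂ) * ((wfun n hn ε a : ℝ) : ℂ)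
        * (if j = (⟨x/2, hk1⟩ : Fin ℓ) then (if a = c then 1 else 0)
           else if j = (⟨x/2+1, hk2⟩ : Fin ℓ) then (if a = c then 1 else 0)
           else 1)))]
  have hfac : ∀ c : Fin n, ∀ j : Fin ℓ,
      (∑ a : Fin n, ((wfun n hn ε a : ℝ) : ℂ) * ((wfun n hn ε a : ℝ) : ℂ)
        * (if j = (⟨x/2, hk1⟩ : Fin ℓ) then (if a = c then 1 else 0)
           else if j = (⟨x/2+1, hk2⟩ : Fin ℓ) then (if a = c then 1 else 0)
           else 1))
      = if j = (⟨x/2, hk1⟩ : Fin ℓ) then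
          ((wfun n hn ε c : ℝ) : ℂ) * ((wfun n hn ε c : ℝ) : ℂ)
        else if j = (⟨x/2+1, hk2⟩ : Fin ℓ) then
          ((wfun n hn ε c : ℝ) : ℂ) * ((wfun n hn ε c : ℝ) : ℂ)
        else 1 := by
    intro c j
    by_cases h1 : j = (⟨x/2, hk1⟩ : Fin ℓ)
    · simp only [h1, eq_self_iff_true, if_true, mul_ite, mul_one, mul_zero]
      rw [Finset.sum_congr rfl (fun a _ => rfl), Finset.sum_ite_eq']
      simp only [Finset.mem_univ, if_true]
    · by_cases h2 : j = (⟨x/2+1, hk2⟩ : Fin ℓ)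
      · simp only [h2, if_neg (Ne.symm hne), mul_ite, mul_one, mul_zero,
          eq_self_iff_true, if_true]
        rw [Finset.sum_ite_eq']
        simp only [Finset.mem_univ, if_true]
      · simp only [if_neg h1, if_neg h2, mul_one]
        exact cast_sum_sq n hn ε hε2
  calc ((u:ℂ) + (v:ℂ) * ((n:ℂ))⁻¹) * ∑ c : Fin n, ∏ j : Fin ℓ,
        (∑ a : Fin n, ((wfun n hn ε a : ℝ) : ℂ) * ((wfun n hn ε a : ℝ) : ℂ)
          * (if j = (⟨x/2, hk1⟩ : Fin ℓ) then (if a = c then 1 else 0)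
             else if j = (⟨x/2+1, hk2⟩ : Fin ℓ) then (if a = c then 1 else 0)
             else 1))
      = ((u:ℂ) + (v:ℂ) * ((n:ℂ))⁻¹) * ∑ c : Fin n,
          (((wfun n hn ε c : ℝ) : ℂ) * ((wfun n hn ε c : ℝ) : ℂ)
            * (((wfun n hn ε c : ℝ) : ℂ) * ((wfun n hn ε c : ℝ) : ℂ))) := by
        congr 1
        refine Finset.sum_congr rfl (fun c _ => ?_)
        rw [Finset.prod_congr rfl (fun j _ => hfac c j)]
        exact prod_two_ite (⟨x/2, hk1⟩ : Fin ℓ) ⟨x/2+1, hk2⟩ hne _ _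
    _ = (((u + v / n) * ((1 - ε ^ 2) ^ 2 + ε ^ 4 / ((n:ℝ) - 1)) : ℝ) : ℂ) := by
        rw [cast_sum_w4 n hn ε hε2]
        push_cast
        ring

lemma energy_eq (n ℓ : ℕ) (hn : 2 ≤ n) (ε u v : ℝ) :
    star (dimerState n ℓ hn ε) ⬝ᵥ (chainH n ℓ (Aop n u v) *ᵥ dimerState n ℓ hn ε)
      = ∑ x ∈ Finset.range (2 * ℓ - 1),
          if h : x + 1 < 2 * ℓ then Ebond n ℓ hn ε u v ⟨x, by omega⟩ ⟨x + 1, h⟩ else 0 := by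
  simp only [mulVec, dotProduct, chainH, Ebond]
  simp only [starRingEnd_apply, Pi.star_apply, Matrix.sum_apply, Finset.sum_apply, dite_apply, Pi.zero_apply, Matrix.zero_apply]
  simp only [Finset.sum_mul, Finset.mul_sum]
  rw [Finset.sum_congr rfl (fun σ (_ : σ ∈ Finset.univ) => Finset.sum_comm), Finset.sum_comm]
  refine Finset.sum_congr rfl (fun x hx => ?_)
  by_cases h : x + 1 < 2 * ℓ
  · rw [dif_pos h]
    simp only [dif_pos h]
  · simp only [dif_neg h, Matrix.zero_apply, zero_mul, mul_zero, Finset.sum_const_zero]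

lemma sum_if_even (I J : ℂ) (m : ℕ) :
    ∑ x ∈ Finset.range (2 * m + 1), (if x % 2 = 0 then I else J)
      = ((m + 1 : ℕ) : ℂ) * I + ((m : ℕ) : ℂ) * J := by
  induction m with
  | zero => simp
  | succ p ih =>
    rw [show 2 * (p + 1) + 1 = (2 * p + 1) + 1 + 1 by ring, Finset.sum_range_succ,
      Finset.sum_range_succ, ih, if_neg (by omega), if_pos (by omega)]
    push_cast
    ring

lemma energy_value (n ℓ : ℕ) (hn : 2 ≤ n) (hℓ : 1 ≤ ℓ) (ε u v : ℝ) (hε2 : ε ^ 2 ≤ 1) :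
    star (dimerState n ℓ hn ε) ⬝ᵥ (chainH n ℓ (Aop n u v) *ᵥ dimerState n ℓ hn ε)
      = (((ℓ : ℝ) * (u + (v / n) * (Real.sqrt (1 - ε ^ 2) + Real.sqrt ((n:ℝ) - 1) * ε) ^ 2)
          + ((ℓ - 1 : ℕ) : ℝ) * ((u + v / n) * ((1 - ε ^ 2) ^ 2 + ε ^ 4 / ((n:ℝ) - 1)))
          : ℝ) : ℂ) := by
  rw [energy_eq n ℓ hn ε u v]
  have hterm : ∀ x ∈ Finset.range (2 * ℓ - 1),
      (if h : x + 1 < 2 * ℓ then Ebond n ℓ hn ε u v ⟨x, by omega⟩ ⟨x + 1, h⟩ else 0)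
      = if x % 2 = 0 then
          ((u + (v / n) * (Real.sqrt (1 - ε ^ 2) + Real.sqrt ((n:ℝ) - 1) * ε) ^ 2 : ℝ) : ℂ)
        else (((u + v / n) * ((1 - ε ^ 2) ^ 2 + ε ^ 4 / ((n:ℝ) - 1)) : ℝ) : ℂ) := by
    intro x hx
    have hx' : x + 1 < 2 * ℓ := by have := Finset.mem_range.mp hx; omega
    rw [dif_pos hx']
    by_cases hpar : x % 2 = 0
    · rw [if_pos hpar, Ebond_even_val n ℓ hn ε u v hε2 x hx' hpar]
    · rw [if_neg hpar, Ebond_odd_val n ℓ hn ε u v hε2 x hx' (by omega)]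
  rw [Finset.sum_congr rfl hterm, show 2 * ℓ - 1 = 2 * (ℓ - 1) + 1 by omega,
    sum_if_even _ _ (ℓ - 1), show (ℓ - 1) + 1 = ℓ by omega]
  push_cast [Nat.cast_sub hℓ]
  ring

set_option maxHeartbeats 1000000 in
/-- For `v < 0` there is `ε ∈ (0,1)` such that the dimerized state `Φ_ε` has energy strictly
below `(2ℓ-1)(u + v/n)`, the optimal product-state energy. -/
theorem dimerized_state_beats_product_states (n ℓ : ℕ) (hn : 2 ≤ n) (hℓ : 1 ≤ ℓ)
    (u v : ℝ) (hv : v < 0) :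
    ∃ ε : ℝ, 0 < ε ∧ ε < 1 ∧
      (star (dimerState n ℓ hn ε) ⬝ᵥ
          (chainH n ℓ ((u : ℂ) • transOp n + (v : ℂ) • QOp n) *ᵥ dimerState n ℓ hn ε)).re
        < ((2 * ℓ - 1 : ℕ) : ℝ) * (u + v / n) := by
  have hn1 : (0:ℝ) < (n:ℝ) - 1 := nR_pos n hn
  have hn2 : (2:ℝ) ≤ (n:ℝ) := by exact_mod_cast hn
  have hnpos : (0:ℝ) < (n:ℝ) := by linarith
  have hℓ1 : (1:ℝ) ≤ (ℓ:ℝ) := by exact_mod_cast hℓ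
  have hasq : Real.sqrt ((n:ℝ) - 1) ^ 2 = (n:ℝ) - 1 := Real.sq_sqrt (by linarith)
  have ha0 : 0 ≤ Real.sqrt ((n:ℝ) - 1) := Real.sqrt_nonneg _
  have ha1 : 1 ≤ Real.sqrt ((n:ℝ) - 1) := by nlinarith [hasq, ha0]
  have hvn : v / (n:ℝ) < 0 := div_neg_of_neg_of_pos hv hnpos
  have hC0 : 0 ≤ ((ℓ:ℝ) - 1) * |u + v / (n:ℝ)| :=
    mul_nonneg (by linarith) (abs_nonneg _)
  have hbpos : 0 < (ℓ:ℝ) * (-(v / (n:ℝ))) * Real.sqrt ((n:ℝ) - 1) :=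
    mul_pos (mul_pos (by linarith) (by linarith)) (by linarith)
  obtain ⟨ε, hε0, hεhalf, hεkey⟩ : ∃ ε : ℝ, 0 < ε ∧ ε ≤ 1/2 ∧
      ε * (2 * (((ℓ:ℝ) - 1) * |u + v / (n:ℝ)| + 1))
        ≤ (ℓ:ℝ) * (-(v / (n:ℝ))) * Real.sqrt ((n:ℝ) - 1) := by
    refine ⟨min (1/2) ((ℓ:ℝ) * (-(v / (n:ℝ))) * Real.sqrt ((n:ℝ) - 1)
        / (2 * (((ℓ:ℝ) - 1) * |u + v / (n:ℝ)| + 1))), ?_, min_le_left _ _, ?_⟩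
    · exact lt_min (by norm_num) (div_pos hbpos (by linarith))
    · have h1 : min (1/2) ((ℓ:ℝ) * (-(v / (n:ℝ))) * Real.sqrt ((n:ℝ) - 1)
          / (2 * (((ℓ:ℝ) - 1) * |u + v / (n:ℝ)| + 1)))
          ≤ (ℓ:ℝ) * (-(v / (n:ℝ))) * Real.sqrt ((n:ℝ) - 1)
            / (2 * (((ℓ:ℝ) - 1) * |u + v / (n:ℝ)| + 1)) := min_le_right _ _
      rw [le_div_iff₀ (by linarith : (0:ℝ) < 2 * (((ℓ:ℝ) - 1) * |u + v / (n:ℝ)| + 1))] at h1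
      exact h1
  have hε1 : ε < 1 := lt_of_le_of_lt hεhalf (by norm_num)
  have hε2 : ε ^ 2 ≤ 1 := by nlinarith
  refine ⟨ε, hε0, hε1, ?_⟩
  rw [show ((u : ℂ) • transOp n + (v : ℂ) • QOp n) = Aop n u v from rfl,
    energy_value n ℓ hn hℓ ε u v hε2, Complex.ofReal_re,
    show ((2 * ℓ - 1 : ℕ) : ℝ) = 2 * (ℓ:ℝ) - 1 from by
      push_cast [Nat.cast_sub (by omega : 1 ≤ 2 * ℓ)]; ring,
    show ((ℓ - 1 : ℕ) : ℝ) = (ℓ:ℝ) - 1 from by push_cast [Nat.cast_sub hℓ]; ring]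
  -- now a purely real inequality
  have hc0sq : Real.sqrt (1 - ε ^ 2) ^ 2 = 1 - ε ^ 2 := Real.sq_sqrt (by nlinarith)
  have hc00 : 0 ≤ Real.sqrt (1 - ε ^ 2) := Real.sqrt_nonneg _
  have hc0half : 1/2 ≤ Real.sqrt (1 - ε ^ 2) := by nlinarith [hc0sq, hc00]
  have hS1 : 1 + Real.sqrt ((n:ℝ) - 1) * ε
      ≤ (Real.sqrt (1 - ε ^ 2) + Real.sqrt ((n:ℝ) - 1) * ε) ^ 2 := by
    nlinarith [mul_nonneg (mul_nonneg ha0 hε0.le)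
        (by linarith : (0:ℝ) ≤ 2 * Real.sqrt (1 - ε ^ 2) - 1),
      mul_nonneg (by linarith : (0:ℝ) ≤ (n:ℝ) - 2) (sq_nonneg ε)]
  have hd0 : 0 ≤ ε ^ 4 / ((n:ℝ) - 1) := by positivity
  have hd1 : ε ^ 4 / ((n:ℝ) - 1) ≤ ε ^ 4 := div_le_self (by positivity) (by linarith)
  have he4 : ε ^ 4 ≤ ε ^ 2 := by
    nlinarith [mul_nonneg (sq_nonneg ε) (by linarith : (0:ℝ) ≤ 1 - ε ^ 2)]
  have hS4a : -2 * ε ^ 2 ≤ ((1 - ε ^ 2) ^ 2 + ε ^ 4 / ((n:ℝ) - 1)) - 1 := by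
    linarith [hd0, sq_nonneg (ε ^ 2)]
  have hS4b : ((1 - ε ^ 2) ^ 2 + ε ^ 4 / ((n:ℝ) - 1)) - 1 ≤ 0 := by
    linarith [hd1, he4]
  have hq1 : (u + v / (n:ℝ)) * (((1 - ε ^ 2) ^ 2 + ε ^ 4 / ((n:ℝ) - 1)) - 1)
      ≤ |u + v / (n:ℝ)| * (2 * ε ^ 2) := by
    calc (u + v / (n:ℝ)) * (((1 - ε ^ 2) ^ 2 + ε ^ 4 / ((n:ℝ) - 1)) - 1)
        ≤ |(u + v / (n:ℝ)) * (((1 - ε ^ 2) ^ 2 + ε ^ 4 / ((n:ℝ) - 1)) - 1)| := le_abs_self _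
      _ = |u + v / (n:ℝ)| * |((1 - ε ^ 2) ^ 2 + ε ^ 4 / ((n:ℝ) - 1)) - 1| := abs_mul _ _
      _ ≤ |u + v / (n:ℝ)| * (2 * ε ^ 2) := by
          apply mul_le_mul_of_nonneg_left _ (abs_nonneg _)
          rw [abs_le]
          constructor <;> linarith
  have hterm2 : ((ℓ:ℝ) - 1) * ((u + v / (n:ℝ)) * ((1 - ε ^ 2) ^ 2 + ε ^ 4 / ((n:ℝ) - 1)))
      ≤ ((ℓ:ℝ) - 1) * (u + v / (n:ℝ)) + 2 * (((ℓ:ℝ) - 1) * |u + v / (n:ℝ)|) * ε ^ 2 := by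
    have h2 := mul_le_mul_of_nonneg_left hq1 (by linarith : (0:ℝ) ≤ (ℓ:ℝ) - 1)
    nlinarith [h2]
  have hterm1 : (ℓ:ℝ) * (u + v / (n:ℝ)
        * (Real.sqrt (1 - ε ^ 2) + Real.sqrt ((n:ℝ) - 1) * ε) ^ 2)
      ≤ (ℓ:ℝ) * (u + v / (n:ℝ)) + (ℓ:ℝ) * (v / (n:ℝ)) * (Real.sqrt ((n:ℝ) - 1) * ε) := by
    have h1 : v / (n:ℝ) * (Real.sqrt (1 - ε ^ 2) + Real.sqrt ((n:ℝ) - 1) * ε) ^ 2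
        ≤ v / (n:ℝ) * (1 + Real.sqrt ((n:ℝ) - 1) * ε) :=
      mul_le_mul_of_nonpos_left hS1 hvn.le
    have h2 : (ℓ:ℝ) * (u + v / (n:ℝ)
          * (Real.sqrt (1 - ε ^ 2) + Real.sqrt ((n:ℝ) - 1) * ε) ^ 2)
        ≤ (ℓ:ℝ) * (u + v / (n:ℝ) * (1 + Real.sqrt ((n:ℝ) - 1) * ε)) := by
      apply mul_le_mul_of_nonneg_left _ (by linarith)
      linarith
    have h3 : (ℓ:ℝ) * (u + v / (n:ℝ) * (1 + Real.sqrt ((n:ℝ) - 1) * ε))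
        = (ℓ:ℝ) * (u + v / (n:ℝ)) + (ℓ:ℝ) * (v / (n:ℝ)) * (Real.sqrt ((n:ℝ) - 1) * ε) := by
      ring
    linarith
  have hfinal : (ℓ:ℝ) * (v / (n:ℝ)) * (Real.sqrt ((n:ℝ) - 1) * ε)
      + 2 * (((ℓ:ℝ) - 1) * |u + v / (n:ℝ)|) * ε ^ 2 < 0 := by
    nlinarith [mul_le_mul_of_nonneg_right hεkey hε0.le, pow_pos hε0 2]
  linarith [hterm1, hterm2, hfinal]
end
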